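/- arXiv:1302.6960 — 2 statements merged into one kernel-verified Lean document; each statement's English description precedes it below -/
import Mathlib

section
/- Let E be a flat theory over a ranked signature Σ, and let s = f(s1,…,sn), t = g(t1,…,tm), s' = f(s1',…,sn') and t' = g(t1',…,tm') be ground terms over Σ such that: (i) for each i ∈ {1,…,n}, s_i is a constant iff s_i' is a constant, and if both are constants then s_i =_E s_i'; (ii) for each j ∈ {1,…,m}, t_j is a constant iff t_j' is a constant, and if both are constants then t_j =_E t_j'; (iii) for each i ∈ {1,…,n} and j ∈ {1,…,m}, s_i' =_E t_j' holds iff s_i =_E t_j holds. Then s =_E t holds iff s' =_E t' holds. -/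
set_option maxHeartbeats 1000000

namespace TreeAut

/-! ### Ranked terms -/

/-- Ranked terms over a symbol type `F` (arities are imposed by well-formedness). -/
inductive RTerm (F : Type) : Type
  | node : F → List (RTerm F) → RTerm F

namespace RTerm

def rootLabel {F : Type} : RTerm F → F
  | .node f _ => f

/-- `SubAt t p s` : the subterm of `t` at position `p` is `s`. -/
inductive SubAt {F : Type} : RTerm F → List ℕ → RTerm F → Prop
  | refl (t : RTerm F) : SubAt t [] t
  | step {f : F} {ts : List (RTerm F)} {i : ℕ} {u s : RTerm F} {p : List ℕ} :
      ts[i]? = some u → SubAt u p s → SubAt (RTerm.node f ts) (i :: p) s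

/-- `p` is a position of `t`. -/
def IsPos {F : Type} (t : RTerm F) (p : List ℕ) : Prop := ∃ s, SubAt t p s

/-- `ReplAt t p s t'` : `t'` is the result of replacing in `t` the subterm at `p` by `s`. -/
inductive ReplAt {F : Type} : RTerm F → List ℕ → RTerm F → RTerm F → Prop
  | here (t s : RTerm F) : ReplAt t [] s s
  | step {f : F} {ts : List (RTerm F)} {i : ℕ} {u u' s : RTerm F} {p : List ℕ} :
      ts[i]? = some u → ReplAt u p s u' →
      ReplAt (RTerm.node f ts) (i :: p) s (RTerm.node f (ts.set i u'))

/-- Height of a term: the maximal length of a position. -/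
def height {F : Type} : RTerm F → ℕ
  | .node _ [] => 0
  | .node f (t :: ts) => max (height t + 1) (height (RTerm.node f ts))

/-- Well-formedness of a term with respect to an arity function. -/
inductive WF {F : Type} (ar : F → ℕ) : RTerm F → Prop
  | node {f : F} {ts : List (RTerm F)} :
      ts.length = ar f → (∀ u ∈ ts, WF ar u) → WF ar (RTerm.node f ts)

/-- A constant, i.e. a term reduced to a symbol (of arity 0). -/
def IsConst {F : Type} (t : RTerm F) : Prop := ∃ c : F, t = RTerm.node c []

/-- Relabeling of a term. -/
def map {F G : Type} (g : F → G) : RTerm F → RTerm G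
  | .node f ts => RTerm.node (g f) (ts.attach.map (fun u => map g u.1))
decreasing_by
  simp only [RTerm.node.sizeOf_spec]
  have := List.sizeOf_lt_of_mem u.2
  omega

end RTerm

/-! ### Patterns (terms with variables) and flat equational theories -/

/-- Terms with variables (variables are natural numbers). -/
inductive Pat (F : Type) : Type
  | var : ℕ → Pat F
  | node : F → List (Pat F) → Pat F

namespace Pat

def subst {F : Type} (σ : ℕ → RTerm F) : Pat F → RTerm F
  | .var v => σ v
  | .node f ps => RTerm.node f (ps.attach.map (fun p => subst σ p.1))
decreasing_by
  simp only [Pat.node.sizeOf_spec]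
  have := List.sizeOf_lt_of_mem p.2
  omega

def height {F : Type} : Pat F → ℕ
  | .var _ => 0
  | .node _ [] => 0
  | .node f (p :: ps) => max (height p + 1) (height (Pat.node f ps))

inductive HasVar {F : Type} (v : ℕ) : Pat F → Prop
  | var : HasVar v (Pat.var v)
  | node {f : F} {ps : List (Pat F)} {p : Pat F} :
      p ∈ ps → HasVar v p → HasVar v (Pat.node f ps)

inductive WF {F : Type} (ar : F → ℕ) : Pat F → Prop
  | var (v : ℕ) : WF ar (Pat.var v)
  | node {f : F} {ps : List (Pat F)} :
      ps.length = ar f → (∀ p ∈ ps, WF ar p) → WF ar (Pat.node f ps)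

end Pat

/-- A flat equation: both sides well-formed, of the same height which is at most 1,
and with the same variables. -/
def IsFlatEq {F : Type} (ar : F → ℕ) (e : Pat F × Pat F) : Prop :=
  e.1.WF ar ∧ e.2.WF ar ∧ e.1.height = e.2.height ∧ e.1.height ≤ 1 ∧
  (∀ v : ℕ, Pat.HasVar v e.1 ↔ Pat.HasVar v e.2)

/-- One rewrite step using an equation of `E` (in either direction) at some position. -/
def Rew {F : Type} (E : List (Pat F × Pat F)) (s t : RTerm F) : Prop :=
  ∃ l r : Pat F, ((l, r) ∈ E ∨ (r, l) ∈ E) ∧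
    ∃ (σ : ℕ → RTerm F) (p : List ℕ),
      RTerm.SubAt s p (l.subst σ) ∧ RTerm.ReplAt s p (r.subst σ) t

/-- Equivalence modulo the set of equations `E`. -/
def EqE {F : Type} (E : List (Pat F × Pat F)) : RTerm F → RTerm F → Prop :=
  Relation.ReflTransGen (Rew E)

/-! ### Global constraints -/

/-- Transition rule of a tree automaton with constraints between brothers:
`sym(args) → res` with brother equalities `bcEq` and disequalities `bcNeq`
(1-based indices of children). -/
structure Rule (F Q : Type) where
  sym : F
  args : List Q
  bcEq : List (ℕ × ℕ)
  bcNeq : List (ℕ × ℕ)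
  res : Q

/-- Atomic global constraints: `q ≈ q'`, `q ≉ q'`, and linear inequalities
`Σ c·|q| ≥ a` (type `|.|`) and `Σ c·‖q‖ ≥ a` (type `‖.‖`). -/
inductive GAtom (Q : Type) : Type
  | eq : Q → Q → GAtom Q
  | neq : Q → Q → GAtom Q
  | cnt : List (ℤ × Q) → ℤ → GAtom Q
  | cls : List (ℤ × Q) → ℤ → GAtom Q

/-- Boolean combinations of atomic global constraints. -/
inductive GC (Q : Type) : Type
  | tt : GC Q
  | ff : GC Q
  | atom : GAtom Q → GC Q
  | and : GC Q → GC Q → GC Q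
  | or : GC Q → GC Q → GC Q
  | not : GC Q → GC Q

/-- The set of `=E`-equivalence classes of members of a set of terms. -/
def classesOf {F : Type} (E : List (Pat F × Pat F)) (S : Set (RTerm F)) :
    Set (Set (RTerm F)) :=
  {C | ∃ t ∈ S, C = {u | EqE E t u}}

section Sat

variable {β F Q : Type}

/-- Positions of a (run) tree where the node has state `q`
(`st` extracts the state of a node label). -/
def stPos (st : β → Q) (r : RTerm β) (q : Q) : Set (List ℕ) :=
  {p | ∃ s, RTerm.SubAt r p s ∧ st s.rootLabel = q}

/-- `⟦|q|⟧` : the number of positions with state `q`. -/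
noncomputable def stCount (st : β → Q) (r : RTerm β) (q : Q) : ℕ :=
  (stPos st r q).ncard

/-- Terms occurring below positions with state `q`. -/
def stTerms (st : β → Q) (sy : β → F) (r : RTerm β) (q : Q) : Set (RTerm F) :=
  {t | ∃ p s, RTerm.SubAt r p s ∧ st s.rootLabel = q ∧ s.map sy = t}

/-- `⟦‖q‖⟧` : the number of `=E`-classes of terms at positions with state `q`. -/
noncomputable def clsCount (E : List (Pat F × Pat F)) (st : β → Q) (sy : β → F)
    (r : RTerm β) (q : Q) : ℕ :=
  (classesOf E (stTerms st sy r q)).ncard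

/-- Satisfaction of a global atomic constraint by a run tree. -/
def satAtom (E : List (Pat F × Pat F)) (st : β → Q) (sy : β → F) (r : RTerm β) :
    GAtom Q → Prop
  | .eq q q' => ∀ p p' s s', p ≠ p' → RTerm.SubAt r p s → RTerm.SubAt r p' s' →
      st s.rootLabel = q → st s'.rootLabel = q' → EqE E (s.map sy) (s'.map sy)
  | .neq q q' => ∀ p p' s s', p ≠ p' → RTerm.SubAt r p s → RTerm.SubAt r p' s' →
      st s.rootLabel = q → st s'.rootLabel = q' → ¬ EqE E (s.map sy) (s'.map sy)
  | .cnt l a => a ≤ (l.map (fun cq => cq.1 * (stCount st r cq.2 : ℤ))).sum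
  | .cls l a => a ≤ (l.map (fun cq => cq.1 * (clsCount E st sy r cq.2 : ℤ))).sum

/-- Satisfaction of a global constraint by a run tree. -/
def satGC (E : List (Pat F × Pat F)) (st : β → Q) (sy : β → F) (r : RTerm β) :
    GC Q → Prop
  | .tt => True
  | .ff => False
  | .atom a => satAtom E st sy r a
  | .and c d => satGC E st sy r c ∧ satGC E st sy r d
  | .or c d => satGC E st sy r c ∨ satGC E st sy r d
  | .not c => ¬ satGC E st sy r c

end Sat

/-! ### Tree automata with global and brother constraints modulo a flat theory -/

/-- A run is represented as a tree labeled by the rules applied at each position. -/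
abbrev Run (F Q : Type) := RTerm (Rule F Q)

def Run.state {F Q : Type} (r : Run F Q) : Q := (RTerm.rootLabel r).res
def Run.term {F Q : Type} (r : Run F Q) : RTerm F := r.map Rule.sym

/-- `r` is a structurally correct run using rules of `Δ`, whose local brother
constraints are satisfied modulo `E`. -/
inductive IsRun {F Q : Type} (Δ : List (Rule F Q)) (E : List (Pat F × Pat F)) :
    Run F Q → Prop
  | node {ρ : Rule F Q} {rs : List (Run F Q)} :
      ρ ∈ Δ →
      ρ.args = rs.map Run.state →
      (∀ r ∈ rs, IsRun Δ E r) →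
      (∀ i j ri rj, (i, j) ∈ ρ.bcEq → rs[i - 1]? = some ri →
        rs[j - 1]? = some rj → EqE E ri.term rj.term) →
      (∀ i j ri rj, (i, j) ∈ ρ.bcNeq → rs[i - 1]? = some ri →
        rs[j - 1]? = some rj → ¬ EqE E ri.term rj.term) →
      IsRun Δ E (RTerm.node ρ rs)

/-- Tree automaton with brother constraints and global constraints modulo a flat theory. -/
structure TABG (F Q : Type) where
  arity : F → ℕ
  stQ : Finset Q
  rules : List (Rule F Q)
  final : List Q
  eqs : List (Pat F × Pat F)
  gc : GC Q

def TABG.IsAccRun {F Q : Type} (A : TABG F Q) (r : Run F Q) : Prop :=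
  IsRun A.rules A.eqs r ∧ satGC A.eqs Rule.res Rule.sym r A.gc ∧ r.state ∈ A.final

def TABG.Lang {F Q : Type} (A : TABG F Q) : Set (RTerm F) :=
  {t | ∃ r : Run F Q, A.IsAccRun r ∧ r.term = t}

def Rule.WFr {F Q : Type} (ar : F → ℕ) (S : Finset Q) (ρ : Rule F Q) : Prop :=
  ρ.args.length = ar ρ.sym ∧ ρ.res ∈ S ∧ (∀ q ∈ ρ.args, q ∈ S) ∧
  (∀ ij ∈ ρ.bcEq, 1 ≤ ij.1 ∧ ij.1 ≤ ρ.args.length ∧ 1 ≤ ij.2 ∧ ij.2 ≤ ρ.args.length) ∧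
  (∀ ij ∈ ρ.bcNeq, 1 ≤ ij.1 ∧ ij.1 ≤ ρ.args.length ∧ 1 ≤ ij.2 ∧ ij.2 ≤ ρ.args.length)

/-- Well-formedness of a TABG: the equational theory is flat, the rules respect
the arities and the state set, and final states belong to the state set. -/
def TABG.WF {F Q : Type} (A : TABG F Q) : Prop :=
  (∀ e ∈ A.eqs, IsFlatEq A.arity e) ∧
  (∀ ρ ∈ A.rules, ρ.WFr A.arity A.stQ) ∧
  (∀ q ∈ A.final, q ∈ A.stQ)

/-! ### Classes of constraints -/

def GAtom.IsEqNeq {Q : Type} : GAtom Q → Prop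
  | .eq _ _ => True
  | .neq _ _ => True
  | .cnt _ _ => False
  | .cls _ _ => False

/-- All coefficients and the constant have the same sign. -/
def sameSign (l : List ℤ) (a : ℤ) : Prop :=
  ((∀ c ∈ l, 0 ≤ c) ∧ 0 ≤ a) ∨ ((∀ c ∈ l, c ≤ 0) ∧ a ≤ 0)

/-- eq/neq atoms and *natural* linear inequalities. -/
def GAtom.IsNat {Q : Type} : GAtom Q → Prop
  | .eq _ _ => True
  | .neq _ _ => True
  | .cnt l a => sameSign (l.map Prod.fst) a
  | .cls l a => sameSign (l.map Prod.fst) a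

/-- eq/neq atoms and natural linear inequalities over the `|q|` only. -/
def GAtom.IsNatCnt {Q : Type} : GAtom Q → Prop
  | .eq _ _ => True
  | .neq _ _ => True
  | .cnt l a => sameSign (l.map Prod.fst) a
  | .cls _ _ => False

def GC.AtomsAre {Q : Type} (P : GAtom Q → Prop) : GC Q → Prop
  | .tt => True
  | .ff => True
  | .atom a => P a
  | .and c d => GC.AtomsAre P c ∧ GC.AtomsAre P d
  | .or c d => GC.AtomsAre P c ∧ GC.AtomsAre P d
  | .not c => GC.AtomsAre P c

/-- Positive conjunctive constraint: a conjunction of atoms. -/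
def GC.IsConjAtoms {Q : Type} : GC Q → Prop
  | .tt => True
  | .ff => False
  | .atom _ => True
  | .and c d => GC.IsConjAtoms c ∧ GC.IsConjAtoms d
  | .or _ _ => False
  | .not _ => False

/-- A literal: an atom (with natural arithmetic atoms) or the negation of an
eq/neq atom. -/
def GC.IsLit {Q : Type} : GC Q → Prop
  | .atom a => GAtom.IsNat a
  | .not (.atom (.eq _ _)) => True
  | .not (.atom (.neq _ _)) => True
  | _ => False

def GC.IsConjLit {Q : Type} : GC Q → Prop
  | .and c d => GC.IsConjLit c ∧ GC.IsConjLit d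
  | c => GC.IsLit c

def GC.IsDNF {Q : Type} : GC Q → Prop
  | .or c d => GC.IsDNF c ∧ GC.IsDNF d
  | c => GC.IsConjLit c

/-- Normalized constraint: `true`, `false`, or a disjunction of conjunctions of
literals in which all arithmetic literals are positive. -/
def GC.Normalized {Q : Type} (c : GC Q) : Prop :=
  c = GC.tt ∨ c = GC.ff ∨ GC.IsDNF c

/-- No reflexive disequality constraints (the TAGED restriction). -/
def GC.NoReflNeq {Q : Type} : GC Q → Prop :=
  GC.AtomsAre (fun a => match a with
    | .neq q q' => q ≠ q'
    | _ => True)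

def conjList {Q : Type} : List (GC Q) → GC Q
  | [] => GC.tt
  | [c] => c
  | c :: cs => GC.and c (conjList cs)

def disjList {Q : Type} : List (GC Q) → GC Q
  | [] => GC.ff
  | [c] => c
  | c :: cs => GC.or c (disjList cs)

/-- No local constraints between brothers. -/
def TABG.NoBrother {F Q : Type} (A : TABG F Q) : Prop :=
  ∀ ρ ∈ A.rules, ρ.bcEq = [] ∧ ρ.bcNeq = []

/-- A TAG: empty equational theory and no brother constraints. -/
def TABG.IsTAG {F Q : Type} (A : TABG F Q) : Prop := A.eqs = [] ∧ A.NoBrother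

/-- A plain tree automaton: a TAG with trivial global constraint. -/
def TABG.IsTA {F Q : Type} (A : TABG F Q) : Prop := A.IsTAG ∧ A.gc = GC.tt

/-! ### Synonym states -/

section Syn

variable {F Q : Type} [DecidableEq Q]

/-- Possible replacements of a state occurrence: `q̄` may stay or become `q̂`. -/
def replS (qb qh q : Q) : List Q := if q = qb then [qb, qh] else [q]

/-- Replacement of every occurrence of `|q̄|` (resp. `‖q̄‖`) by `|q̄| + |q̂|`
(resp. `‖q̄‖ + ‖q̂‖`) in a linear expression. -/
def linRepl (qb qh : Q) (l : List (ℤ × Q)) : List (ℤ × Q) :=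
  l.flatMap (fun cq => (replS qb qh cq.2).map (fun q' => (cq.1, q')))

/-- Literal transformation on positive atoms. -/
def synAtom (qb qh : Q) : GAtom Q → GC Q
  | .eq q1 q2 => conjList ((replS qb qh q1).flatMap (fun a =>
      (replS qb qh q2).map (fun b => GC.atom (GAtom.eq a b))))
  | .neq q1 q2 => conjList ((replS qb qh q1).flatMap (fun a =>
      (replS qb qh q2).map (fun b => GC.atom (GAtom.neq a b))))
  | .cnt l a => GC.atom (GAtom.cnt (linRepl qb qh l) a)
  | .cls l a => GC.atom (GAtom.cls (linRepl qb qh l) a)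

/-- The literal transformation `Ĉ` of (a normalized) constraint, for `q̄ ↝ q̂`. -/
def GC.synTrans (qb qh : Q) : GC Q → GC Q
  | .tt => .tt
  | .ff => .ff
  | .atom a => synAtom qb qh a
  | .not (.atom (.eq q1 q2)) => disjList ((replS qb qh q1).flatMap (fun a =>
      (replS qb qh q2).map (fun b => GC.not (GC.atom (GAtom.eq a b)))))
  | .not (.atom (.neq q1 q2)) => disjList ((replS qb qh q1).flatMap (fun a =>
      (replS qb qh q2).map (fun b => GC.not (GC.atom (GAtom.neq a b)))))
  | .not c => GC.not (GC.synTrans qb qh c)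
  | .and c d => GC.and (GC.synTrans qb qh c) (GC.synTrans qb qh d)
  | .or c d => GC.or (GC.synTrans qb qh c) (GC.synTrans qb qh d)

/-- All rules obtained from `ρ` by all possible replacements of occurrences of
`q̄` by `q̂`. -/
def Rule.synVars (qb qh : Q) (ρ : Rule F Q) : List (Rule F Q) :=
  (ρ.args.mapM (replS qb qh)).flatMap (fun args' =>
    (replS qb qh ρ.res).map (fun res' =>
      { sym := ρ.sym, args := args', bcEq := ρ.bcEq, bcNeq := ρ.bcNeq, res := res' }))

/-- `F_{q̄↝q̂}` on the list of final states. -/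
def finSyn (qb qh : Q) (l : List Q) : List Q := if qb ∈ l then qh :: l else l

/-- The constraint `‖q‖ = k`. -/
def clsEqC (q : Q) (k : ℤ) : GC Q :=
  GC.and (GC.atom (GAtom.cls [(1, q)] k)) (GC.atom (GAtom.cls [(-1, q)] (-k)))

/-- The automaton `A_{q̄↝q̂}`. -/
def TABG.synonym (A : TABG F Q) (qb qh : Q) : TABG F Q :=
  { arity := A.arity
    stQ := insert qh A.stQ
    rules := A.rules.flatMap (Rule.synVars qb qh)
    final := finSyn qb qh A.final
    eqs := A.eqs
    gc := GC.and
      (GC.or (GC.and (clsEqC qb 0) (clsEqC qh 0))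
             (GC.and (clsEqC qh 1) (GC.atom (GAtom.neq qb qh))))
      (GC.synTrans qb qh A.gc) }

end Syn

/-! ### Removal of the counting constraints `|q|` : the automaton `A_¬ℕ` -/

def GC.cntAtoms {Q : Type} : GC Q → List (List (ℤ × Q) × ℤ)
  | .atom (.cnt l a) => [(l, a)]
  | .and c d => GC.cntAtoms c ++ GC.cntAtoms d
  | .or c d => GC.cntAtoms c ++ GC.cntAtoms d
  | .not c => GC.cntAtoms c
  | _ => []

def GC.eqAtoms {Q : Type} : GC Q → List (Q × Q)
  | .atom (.eq q q') => [(q, q')]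
  | .and c d => GC.eqAtoms c ++ GC.eqAtoms d
  | .or c d => GC.eqAtoms c ++ GC.eqAtoms d
  | .not c => GC.eqAtoms c
  | _ => []

def GC.neqAtoms {Q : Type} : GC Q → List (Q × Q)
  | .atom (.neq q q') => [(q, q')]
  | .and c d => GC.neqAtoms c ++ GC.neqAtoms d
  | .or c d => GC.neqAtoms c ++ GC.neqAtoms d
  | .not c => GC.neqAtoms c
  | _ => []

/-- `max_A` : one plus the maximal constant occurring in the counting literals. -/
def GC.maxConst {Q : Type} (c : GC Q) : ℕ :=
  1 + ((c.cntAtoms.map (fun la => la.2.natAbs)).foldr max 0)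

/-- Truncated sum of two mappings `Q → {0,…,m}`. -/
def msumF {Q : Type} {m : ℕ} (M1 M2 : Q → Fin (m + 1)) : Q → Fin (m + 1) :=
  fun q => ⟨min ((M1 q : ℕ) + (M2 q : ℕ)) m, Nat.lt_succ_of_le (Nat.min_le_right _ _)⟩

/-- The mapping `M_q`. -/
def unitMap {Q : Type} [DecidableEq Q] (m : ℕ) (q : Q) : Q → Fin (m + 1) :=
  fun q' => if q' = q then ⟨min 1 m, Nat.lt_succ_of_le (Nat.min_le_right _ _)⟩
            else ⟨0, Nat.succ_pos m⟩

/-- Value of a linear expression under a mapping. -/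
def lvalF {Q : Type} {m : ℕ} (M : Q → Fin (m + 1)) (l : List (ℤ × Q)) : ℤ :=
  (l.map (fun cq => cq.1 * ((M cq.2 : ℕ) : ℤ))).sum

/-- All variants of a rule, decorated with occurrence-counting mappings. -/
noncomputable def Rule.notNVars {F Q : Type} [Fintype Q] [DecidableEq Q] (m : ℕ) (ρ : Rule F Q) :
    List (Rule F (Q × (Q → Fin (m + 1)))) :=
  ((ρ.args.mapM (fun q =>
      ((Finset.univ : Finset (Q → Fin (m + 1))).toList).map (fun M => (q, M))))).map
    (fun args' =>
      { sym := ρ.sym, args := args', bcEq := ρ.bcEq, bcNeq := ρ.bcNeq,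
        res := (ρ.res, (args'.map Prod.snd).foldr msumF (unitMap m ρ.res)) })

/-- The automaton `A_¬ℕ`. -/
noncomputable def TABG.notN {F Q : Type} [Fintype Q] [DecidableEq Q] (A : TABG F Q) :
    TABG F (Q × (Q → Fin (A.gc.maxConst + 1))) :=
  { arity := A.arity
    stQ := A.stQ ×ˢ (Finset.univ : Finset (Q → Fin (A.gc.maxConst + 1)))
    rules := A.rules.flatMap (Rule.notNVars A.gc.maxConst)
    final := (A.final.flatMap (fun q =>
        ((Finset.univ : Finset (Q → Fin (A.gc.maxConst + 1))).toList).map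
          (fun M => (q, M)))).filter
        (fun qM => decide (∀ la ∈ A.gc.cntAtoms, la.2 ≤ lvalF qM.2 la.1))
    eqs := A.eqs
    gc := GC.and
      (conjList ((A.gc.eqAtoms).flatMap (fun qq =>
        ((Finset.univ : Finset (Q → Fin (A.gc.maxConst + 1))).toList).flatMap (fun M1 =>
          ((Finset.univ : Finset (Q → Fin (A.gc.maxConst + 1))).toList).map (fun M2 =>
            GC.atom (GAtom.eq (qq.1, M1) (qq.2, M2)))))))
      (conjList ((A.gc.neqAtoms).flatMap (fun qq =>
        ((Finset.univ : Finset (Q → Fin (A.gc.maxConst + 1))).toList).flatMap (fun M1 =>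
          ((Finset.univ : Finset (Q → Fin (A.gc.maxConst + 1))).toList).map (fun M2 =>
            GC.atom (GAtom.neq (qq.1, M1) (qq.2, M2))))))) }

/-! ### Global pumpings -/

section Pump

variable {F Q : Type}

/-- `H_i` : positions of subruns of positive height equal to `i`. -/
def Hset (r : Run F Q) (i : ℕ) : Set (List ℕ) :=
  {p | ∃ s, RTerm.SubAt r p s ∧ 0 < RTerm.height s ∧ RTerm.height s = i}

/-- `Ȟ_i` : positions `p.j` of subruns of positive height `< i` whose parent has
height `> i`. -/
def Hcheck (r : Run F Q) (i : ℕ) : Set (List ℕ) :=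
  {p' | ∃ (p : List ℕ) (j : ℕ) (s s' : Run F Q), p' = p ++ [j] ∧
    RTerm.SubAt r p s ∧ RTerm.SubAt r p' s' ∧
    0 < RTerm.height s' ∧ RTerm.height s' < i ∧ i < RTerm.height s}

/-- `H̊_i` : positions `p.j` of subruns of height `0` (with `0 < i`) whose parent
has height `> i`. -/
def Hring (r : Run F Q) (i : ℕ) : Set (List ℕ) :=
  {p' | ∃ (p : List ℕ) (j : ℕ) (s s' : Run F Q), p' = p ++ [j] ∧
    RTerm.SubAt r p s ∧ RTerm.SubAt r p' s' ∧
    RTerm.height s' = 0 ∧ 0 < i ∧ i < RTerm.height s}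

def Dom (r : Run F Q) (i : ℕ) : Set (List ℕ) := Hset r i ∪ Hcheck r i ∪ Hring r i

/-- A pump-injection `I : (H_i ∪ Ȟ_i ∪ H̊_i) → (H_j ∪ Ȟ_j ∪ H̊_j)`. -/
structure PumpInj (E : List (Pat F × Pat F)) (r : Run F Q) (i j : ℕ)
    (I : List ℕ → List ℕ) : Prop where
  inj : Set.InjOn I (Dom r i)
  mapsH : Set.MapsTo I (Hset r i) (Hset r j)
  mapsHc : Set.MapsTo I (Hcheck r i) (Hcheck r j)
  mapsHr : Set.MapsTo I (Hring r i) (Hring r j)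
  idRing : ∀ p ∈ Hring r i, I p = p
  stPres : ∀ p ∈ Dom r i, ∀ s s', RTerm.SubAt r p s → RTerm.SubAt r (I p) s' →
    Run.state s = Run.state s'
  eqPres : ∀ p1 p2, p1 ∈ Dom r i → p2 ∈ Dom r i →
    ∀ s1 s2 s1' s2', RTerm.SubAt r p1 s1 → RTerm.SubAt r p2 s2 →
      RTerm.SubAt r (I p1) s1' → RTerm.SubAt r (I p2) s2' →
      (EqE E (Run.term s1) (Run.term s2) ↔ EqE E (Run.term s1') (Run.term s2'))

/-- Simultaneous replacement at all positions of `D` (which are assumed to be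
pairwise parallel): at a position of `D` the subtree is replaced by a tree
allowed by `ρ`, elsewhere the tree is kept. -/
inductive MultiRepl {β : Type} (D : Set (List ℕ)) (ρ : List ℕ → RTerm β → Prop) :
    List ℕ → RTerm β → RTerm β → Prop
  | here {p : List ℕ} {t t' : RTerm β} : p ∈ D → ρ p t' → MultiRepl D ρ p t t'
  | node {p : List ℕ} {f : β} {ts ts' : List (RTerm β)} :
      p ∉ D → ts.length = ts'.length →
      (∀ k u u', ts[k]? = some u → ts'[k]? = some u' →
        MultiRepl D ρ (p ++ [k]) u u') →
      MultiRepl D ρ p (RTerm.node f ts) (RTerm.node f ts')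

/-- `r'` is the global pumping on `r` with indexes `i,j` and injection `I`. -/
def IsGlobalPumpingWith (E : List (Pat F × Pat F)) (r : Run F Q) (i j : ℕ)
    (I : List ℕ → List ℕ) (r' : Run F Q) : Prop :=
  PumpInj E r i j I ∧
  MultiRepl (Dom r i) (fun p s => RTerm.SubAt r (I p) s) [] r r'

/-- The `=E`-classes of the subterms at positions of `P`. -/
def classesAt (E : List (Pat F × Pat F)) (r : Run F Q) (P : Set (List ℕ)) :
    Set (Set (RTerm F)) :=
  classesOf E {t | ∃ p ∈ P, ∃ s, RTerm.SubAt r p s ∧ Run.term s = t}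

/-- The tuple `r_{t,P}` of a class `C`, as a function on states. -/
noncomputable def tupleAt (r : Run F Q) (P : Set (List ℕ)) (C : Set (RTerm F))
    (q : Q) : ℕ :=
  {p | p ∈ P ∧ ∃ s, RTerm.SubAt r p s ∧ Run.state s = q ∧ Run.term s ∈ C}.ncard

/-- The multiset ordering `r_P ≤ r_{P'}` : an injection on classes which is
dominating on the associated tuples. -/
def MsetLE (E : List (Pat F × Pat F)) (r : Run F Q) (P P' : Set (List ℕ)) : Prop :=
  ∃ φ : Set (RTerm F) → Set (RTerm F),
    Set.InjOn φ (classesAt E r P) ∧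
    Set.MapsTo φ (classesAt E r P) (classesAt E r P') ∧
    ∀ C ∈ classesAt E r P, ∀ q, tupleAt r P C q ≤ tupleAt r P' (φ C) q

end Pump

/-! ### Multisets of tuples of naturals (for the well quasi-ordering) -/

def TupLE {n : ℕ} (x y : Fin n → ℕ) : Prop := ∀ k, x k ≤ y k

/-- Multiset ordering: an injection mapping each element to a dominating one. -/
def MLE {n : ℕ} (S T : Multiset (Fin n → ℕ)) : Prop :=
  ∃ T' : Multiset (Fin n → ℕ), T' ≤ T ∧ Multiset.Rel TupLE S T'

def msumT {n : ℕ} (S : Multiset (Fin n → ℕ)) : ℕ :=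
  (S.map (fun x => ∑ k, x k)).sum

/-! ### Hedge automata with global constraints, and currying -/

/-- A finite word automaton over the alphabet `Q` (auxiliary states are naturals). -/
structure WordAut (Q : Type) where
  stS : Finset ℕ
  init : ℕ
  final : List ℕ
  trans : List (ℕ × Q × ℕ)

inductive WAccepts {Q : Type} (W : WordAut Q) : ℕ → List Q → Prop
  | nil {s : ℕ} : s ∈ W.final → WAccepts W s []
  | cons {s : ℕ} {q : Q} {s' : ℕ} {w : List Q} :
      (s, q, s') ∈ W.trans → WAccepts W s' w → WAccepts W s (q :: w)

def WordAut.Lang {Q : Type} (W : WordAut Q) (w : List Q) : Prop := WAccepts W W.init w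

/-- Transition rule `a(L) → q` of a hedge automaton. -/
structure HRule (F Q : Type) where
  sym : F
  wa : WordAut Q
  res : Q

/-- Hedge automaton with global constraints, over unranked ordered terms. -/
structure HAG (F Q : Type) where
  stQ : Finset Q
  rules : List (HRule F Q)
  final : List Q
  gc : GC Q

abbrev HRun (F Q : Type) := RTerm (HRule F Q)

def HRun.state {F Q : Type} (r : HRun F Q) : Q := (RTerm.rootLabel r).res
def HRun.term {F Q : Type} (r : HRun F Q) : RTerm F := r.map HRule.sym

inductive IsHRun {F Q : Type} (Δ : List (HRule F Q)) : HRun F Q → Prop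
  | node {ρ : HRule F Q} {rs : List (HRun F Q)} :
      ρ ∈ Δ → ρ.wa.Lang (rs.map HRun.state) →
      (∀ r ∈ rs, IsHRun Δ r) → IsHRun Δ (RTerm.node ρ rs)

def HAG.Lang {F Q : Type} (A : HAG F Q) : Set (RTerm F) :=
  {t | ∃ r : HRun F Q, IsHRun A.rules r ∧
        satGC ([] : List (Pat F × Pat F)) HRule.res HRule.sym r A.gc ∧
        HRun.state r ∈ A.final ∧ HRun.term r = t}

/-- The ranked signature `Σ_@` : symbols of `Σ` become constants, `none` is the
binary symbol `@`. -/
def arAt {F : Type} : Option F → ℕ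
  | none => 2
  | some _ => 0

/-- The `curry` encoding of unranked terms into ranked terms over `Σ_@`. -/
inductive Curried {F : Type} : RTerm F → RTerm (Option F) → Prop
  | base {a : F} : Curried (RTerm.node a []) (RTerm.node (some a) [])
  | step {a : F} {ts : List (RTerm F)} {t : RTerm F} {u v : RTerm (Option F)} :
      Curried (RTerm.node a ts) u → Curried t v →
      Curried (RTerm.node a (ts ++ [t])) (RTerm.node none [u, v])

/-! ### Concrete signatures and languages -/

/-- The signature `{a:0, s:1, f:2}` (resp. `{a:0, g:1, f:2}`): symbol `0` has
arity 0, symbol `1` arity 1, symbol `2` arity 2. -/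
def ar3 : Fin 3 → ℕ := ![0, 1, 2]

/-- `iter1 n` is `s^n(a)` (resp. `g^n(a)`). -/
def iter1 : ℕ → RTerm (Fin 3)
  | 0 => RTerm.node 0 []
  | n + 1 => RTerm.node 1 [iter1 n]

/-- `chain [n1,…,nk] = f(s^{n1}(a), f(s^{n2}(a), …, f(s^{nk}(a), a)…))`. -/
def chain : List ℕ → RTerm (Fin 3)
  | [] => RTerm.node 0 []
  | n :: ns => RTerm.node 2 [iter1 n, chain ns]

/-- The language of chains with pairwise distinct exponents. -/
def LKey : Set (RTerm (Fin 3)) := {t | ∃ ns : List ℕ, ns.Nodup ∧ t = chain ns}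

/-- `bracket [n1,…,nk] = f(g^{n1}(a), f(…, f(g^{n_{k−1}}(a), g^{n_k}(a))…))`. -/
def bracket : List ℕ → RTerm (Fin 3)
  | [] => RTerm.node 0 []
  | [n] => iter1 n
  | n :: ns => RTerm.node 2 [iter1 n, bracket ns]

/-- Every entry has exactly one partner with the same value. -/
def ExactlyOnePartner (ns : List ℕ) : Prop :=
  ∀ i, i < ns.length → ∃! j, j < ns.length ∧ j ≠ i ∧ ns[i]? = ns[j]?

def LDup : Set (RTerm (Fin 3)) :=
  {t | ∃ ns : List ℕ, ns ≠ [] ∧ ExactlyOnePartner ns ∧ t = bracket ns}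

/-! ### Concrete, codable presentations of automata -/

abbrev RuleData := ℕ × List ℕ × List (ℕ × ℕ) × List (ℕ × ℕ) × ℕ
abbrev PatAtomData := ℕ ⊕ ℕ
abbrev FlatSideData := PatAtomData ⊕ (ℕ × List PatAtomData)
abbrev LinData := List (ℤ × ℕ) × ℤ
abbrev GAtomData := (ℕ × ℕ) ⊕ ((ℕ × ℕ) ⊕ (LinData ⊕ LinData))
abbrev GCNodeData := GAtomData ⊕ (ℕ × ℕ × ℕ)
abbrev TABGData :=
  List (ℕ × ℕ) × List RuleData × List ℕ × List (FlatSideData × FlatSideData) ×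
    List GCNodeData

def decodePatAtom : PatAtomData → Pat ℕ
  | Sum.inl v => Pat.var v
  | Sum.inr c => Pat.node c []

def decodeSide : FlatSideData → Pat ℕ
  | Sum.inl a => decodePatAtom a
  | Sum.inr (f, l) => Pat.node f (l.map decodePatAtom)

def decodeGAtom : GAtomData → GAtom ℕ
  | Sum.inl (q, q') => GAtom.eq q q'
  | Sum.inr (Sum.inl (q, q')) => GAtom.neq q q'
  | Sum.inr (Sum.inr (Sum.inl (l, a))) => GAtom.cnt l a
  | Sum.inr (Sum.inr (Sum.inr (l, a))) => GAtom.cls l a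

def decodeGC (nodes : List GCNodeData) : ℕ → ℕ → GC ℕ
  | 0, _ => GC.tt
  | fuel + 1, i =>
    match nodes[i]? with
    | some (Sum.inl a) => GC.atom (decodeGAtom a)
    | some (Sum.inr (op, l, rr)) =>
      if op = 0 then GC.tt
      else if op = 1 then GC.ff
      else if op = 2 then GC.and (decodeGC nodes fuel l) (decodeGC nodes fuel rr)
      else if op = 3 then GC.or (decodeGC nodes fuel l) (decodeGC nodes fuel rr)
      else GC.not (decodeGC nodes fuel l)
    | none => GC.tt

def decodeRule : RuleData → Rule ℕ ℕ
  | (f, args, be, bn, q) => ⟨f, args, be, bn, q⟩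

def decodeArity (sig : List (ℕ × ℕ)) : ℕ → ℕ :=
  fun f => (((sig.find? (fun p => p.1 == f)).map Prod.snd).getD 0)

def dataStates (rules : List RuleData) (final : List ℕ) : Finset ℕ :=
  (rules.flatMap (fun r => r.2.2.2.2 :: r.2.1)).toFinset ∪ final.toFinset

/-- Decoding of a full TABG with arbitrary Boolean global constraint. -/
def decodeTABG (d : TABGData) : TABG ℕ ℕ :=
  { arity := decodeArity d.1
    stQ := dataStates d.2.1 d.2.2.1
    rules := d.2.1.map decodeRule
    final := d.2.2.1
    eqs := d.2.2.2.1.map (fun e => (decodeSide e.1, decodeSide e.2))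
    gc := decodeGC d.2.2.2.2 (d.2.2.2.2).length 0 }

/-- Data for a `TAG^∧[≈]` : signature, rules (no brother constraints), final
states, and a conjunction of equational atoms `q ≈ q'`. -/
abbrev TAGCEData := List (ℕ × ℕ) × List (ℕ × List ℕ × ℕ) × List ℕ × List (ℕ × ℕ)

def decodeTAGCE (d : TAGCEData) : TABG ℕ ℕ :=
  { arity := decodeArity d.1
    stQ := (d.2.1.flatMap (fun r => r.2.2 :: r.2.1)).toFinset ∪ d.2.2.1.toFinset
    rules := d.2.1.map (fun r => ⟨r.1, r.2.1, [], [], r.2.2⟩)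
    final := d.2.2.1
    eqs := []
    gc := conjList (d.2.2.2.map (fun qq => GC.atom (GAtom.eq qq.1 qq.2))) }

/-- Data for a `TAG^∧[≈, |.|_ℤ]` : as above plus a conjunction of integer linear
inequalities. -/
abbrev TAGCZData :=
  List (ℕ × ℕ) × List (ℕ × List ℕ × ℕ) × List ℕ × List (ℕ × ℕ) × List LinData

def decodeTAGCZ (d : TAGCZData) : TABG ℕ ℕ :=
  { arity := decodeArity d.1
    stQ := (d.2.1.flatMap (fun r => r.2.2 :: r.2.1)).toFinset ∪ d.2.2.1.toFinset
    rules := d.2.1.map (fun r => ⟨r.1, r.2.1, [], [], r.2.2⟩)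
    final := d.2.2.1
    eqs := []
    gc := conjList
      (d.2.2.2.1.map (fun qq => GC.atom (GAtom.eq qq.1 qq.2)) ++
       d.2.2.2.2.map (fun la => GC.atom (GAtom.cnt la.1 la.2))) }

/-- A tree language over the ranked signature `ar` is regular if it is the
language of a plain tree automaton. -/
def IsRegular (ar : ℕ → ℕ) (L : Set (RTerm ℕ)) : Prop :=
  ∃ (n : ℕ) (B : TABG ℕ (Fin n)), B.arity = ar ∧ B.WF ∧ B.IsTA ∧ B.Lang = L

/-! ### Automata classes as predicates -/

/-- A TAGED: a TAG whose constraint is a conjunction of atoms `q ≈ q'`, `q ≉ q'`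
without reflexive disequalities. -/
def TAGEDCond {F Q : Type} (A : TABG F Q) : Prop :=
  A.IsTAG ∧ A.gc.IsConjAtoms ∧ A.gc.AtomsAre GAtom.IsEqNeq ∧ A.gc.NoReflNeq

/-- A positive conjunctive TAG with eq/neq atoms (`TAG^∧[≈,≉]`). -/
def TAGCwCond {F Q : Type} (A : TABG F Q) : Prop :=
  A.IsTAG ∧ A.gc.IsConjAtoms ∧ A.gc.AtomsAre GAtom.IsEqNeq

end TreeAut

namespace TreeAut

/-! ### Auxiliary development for Statement 0 -/

section Statement0Aux

variable {F : Type}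

private theorem list_set_of_get? {α : Type} : ∀ (l : List α) (i : ℕ) (a : α),
    l[i]? = some a → l.set i a = l
  | [], _, _, h => by simp at h
  | x :: xs, 0, a, h => by
      simp only [List.getElem?_cons_zero, Option.some.injEq] at h; simp [h]
  | x :: xs, i+1, a, h => by
      simp only [List.getElem?_cons_succ] at h
      simp [list_set_of_get? xs i a h]

private theorem list_get?_append_cons {α : Type} : ∀ (pre : List α) (a : α) (suf : List α),
    (pre ++ a :: suf)[pre.length]? = some a
  | [], _, _ => rfl
  | x :: xs, a, suf => by simpa using list_get?_append_cons xs a suf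

private theorem list_set_append_cons {α : Type} : ∀ (pre : List α) (a b : α) (suf : List α),
    (pre ++ a :: suf).set pre.length b = pre ++ b :: suf
  | [], _, _, _ => rfl
  | x :: xs, a, b, suf => by simp [list_set_append_cons xs a b suf]

private theorem list_get?_set_self {α : Type} (l : List α) (i : ℕ) (a b : α)
    (h : l[i]? = some a) : (l.set i b)[i]? = some b := by
  have hi := (List.getElem?_eq_some_iff.mp h).1
  rw [List.getElem?_set_self hi]

private theorem list_get?_of_lt {α : Type} (l : List α) (i : ℕ) (h : i < l.length) :
    ∃ a, l[i]? = some a :=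
  ⟨l[i], List.getElem?_eq_some_iff.mpr ⟨h, rfl⟩⟩

/-! #### unfolding lemmas -/

theorem subst_node' (σ : ℕ → RTerm F) (f : F) (ps : List (Pat F)) :
    Pat.subst σ (Pat.node f ps) = RTerm.node f (ps.map (Pat.subst σ)) := by
  rw [Pat.subst]; simp

theorem subst_var' (σ : ℕ → RTerm F) (v : ℕ) : Pat.subst σ (Pat.var v) = σ v := by
  rw [Pat.subst]

/-! #### height lemmas -/

theorem height_node_nil (f : F) : (RTerm.node f ([] : List (RTerm F))).height = 0 := by
  simp [RTerm.height]

theorem height_node_cons (f : F) (t : RTerm F) (ts : List (RTerm F)) :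
    (RTerm.node f (t :: ts)).height = max (t.height + 1) (RTerm.node f ts).height := by
  simp [RTerm.height]

theorem aux_height_mem {f : F} : ∀ {ts : List (RTerm F)} {t : RTerm F}, t ∈ ts →
    t.height + 1 ≤ (RTerm.node f ts).height
  | [], t, h => by simp at h
  | u :: us, t, h => by
      rw [height_node_cons]
      rcases List.mem_cons.mp h with rfl | h
      · exact le_max_left _ _
      · exact le_trans (aux_height_mem h) (le_max_right _ _)

theorem aux_height_le {f : F} {K : ℕ} : ∀ {ts : List (RTerm F)},
    (∀ t ∈ ts, t.height + 1 ≤ K) → (RTerm.node f ts).height ≤ K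
  | [], _ => by rw [height_node_nil]; exact Nat.zero_le K
  | u :: us, h => by
      rw [height_node_cons]
      exact max_le (h u (by simp)) (aux_height_le fun t ht => h t (by simp [ht]))

theorem aux_height_pos {f : F} {ts : List (RTerm F)} (h : ts ≠ []) :
    1 ≤ (RTerm.node f ts).height := by
  cases ts with
  | nil => exact absurd rfl h
  | cons t ts => rw [height_node_cons]; omega

theorem aux_isConst_node {f : F} {ts : List (RTerm F)} :
    (RTerm.node f ts).IsConst ↔ ts = [] := by
  constructor
  · rintro ⟨c, hc⟩
    injection hc with _ h
  · rintro rfl; exact ⟨f, rfl⟩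

/-! #### pattern height and variable lemmas -/

theorem pat_height_node_cons (f : F) (p : Pat F) (ps : List (Pat F)) :
    (Pat.node f (p :: ps)).height = max (p.height + 1) (Pat.node f ps).height := by
  simp [Pat.height]

theorem aux_pat_child {f : F} : ∀ {ps : List (Pat F)} {p : Pat F}, p ∈ ps →
    p.height + 1 ≤ (Pat.node f ps).height
  | [], p, h => by simp at h
  | q :: qs, p, h => by
      rw [pat_height_node_cons]
      rcases List.mem_cons.mp h with rfl | h
      · exact le_max_left _ _
      · exact le_trans (aux_pat_child h) (le_max_right _ _)

theorem aux_pat_zero {p : Pat F} (h : p.height = 0) :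
    (∃ x, p = Pat.var x) ∨ (∃ c, p = Pat.node c []) := by
  cases p with
  | var x => exact Or.inl ⟨x, rfl⟩
  | node f ps =>
    cases ps with
    | nil => exact Or.inr ⟨f, rfl⟩
    | cons q qs => rw [pat_height_node_cons] at h; omega

theorem aux_novar_nil {x : ℕ} {c : F} : ¬ Pat.HasVar x (Pat.node c ([] : List (Pat F))) := by
  intro h
  cases h with
  | node hm _ => simp at hm

theorem aux_hasvar_var {x y : ℕ} (h : Pat.HasVar x (Pat.var y : Pat F)) : y = x := by
  cases h; rfl

theorem aux_hasvar_node {x : ℕ} {f : F} {ps : List (Pat F)}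
    (hh : (Pat.node f ps).height ≤ 1) (h : Pat.HasVar x (Pat.node f ps)) :
    ∃ i : ℕ, ps[i]? = some (Pat.var x) := by
  cases h with
  | node hm hv =>
    rename_i p
    have hp0 : p.height = 0 := by have := aux_pat_child (f := f) hm; omega
    rcases aux_pat_zero hp0 with ⟨y, rfl⟩ | ⟨c, rfl⟩
    · obtain rfl := aux_hasvar_var hv
      exact List.mem_iff_getElem?.mp hm
    · exact absurd hv aux_novar_nil

theorem aux_hasvar_of_get {x : ℕ} {f : F} {ps : List (Pat F)} {i : ℕ}
    (h : ps[i]? = some (Pat.var x)) : Pat.HasVar x (Pat.node f ps) :=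
  Pat.HasVar.node (List.mem_of_getElem? h) Pat.HasVar.var

end Statement0Aux

section Statement0Aux2

variable {F : Type}

/-! #### basic facts about `Rew` and `EqE` -/

theorem eqe_refl {E : List (Pat F × Pat F)} {a : RTerm F} : EqE E a a :=
  Relation.ReflTransGen.refl

theorem eqe_trans {E : List (Pat F × Pat F)} {a b c : RTerm F}
    (h1 : EqE E a b) (h2 : EqE E b c) : EqE E a c :=
  Relation.ReflTransGen.trans h1 h2

theorem eqe_single {E : List (Pat F × Pat F)} {a b : RTerm F} (h : Rew E a b) : EqE E a b :=
  Relation.ReflTransGen.single h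

theorem aux_subAt_nil {s u : RTerm F} (h : RTerm.SubAt s [] u) : u = s := by
  cases h; rfl

theorem aux_replAt_nil {s v t : RTerm F} (h : RTerm.ReplAt s [] v t) : t = v := by
  cases h; rfl

theorem aux_subAt_cons {f : F} {ws : List (RTerm F)} {i : ℕ} {p : List ℕ} {u : RTerm F}
    (h : RTerm.SubAt (RTerm.node f ws) (i :: p) u) :
    ∃ w, ws[i]? = some w ∧ RTerm.SubAt w p u := by
  cases h with
  | step hg hs => exact ⟨_, hg, hs⟩

theorem aux_replAt_cons {f : F} {ws : List (RTerm F)} {i : ℕ} {p : List ℕ} {v t : RTerm F}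
    (h : RTerm.ReplAt (RTerm.node f ws) (i :: p) v t) :
    ∃ w w', ws[i]? = some w ∧ RTerm.ReplAt w p v w' ∧ t = RTerm.node f (ws.set i w') := by
  cases h with
  | step hg hr => exact ⟨_, _, hg, hr, rfl⟩

theorem aux_swap : ∀ {p : List ℕ} {s u v t : RTerm F},
    RTerm.SubAt s p u → RTerm.ReplAt s p v t → RTerm.SubAt t p v ∧ RTerm.ReplAt t p u s := by
  intro p
  induction p with
  | nil =>
    intro s u v t h1 h2
    obtain rfl := aux_subAt_nil h1
    obtain rfl := aux_replAt_nil h2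
    exact ⟨RTerm.SubAt.refl _, RTerm.ReplAt.here _ _⟩
  | cons i p ih =>
    intro s u v t h1 h2
    cases s with
    | node f ts =>
      obtain ⟨w, hw, hsub⟩ := aux_subAt_cons h1
      obtain ⟨w₂, w', hw₂, hrep, rfl⟩ := aux_replAt_cons h2
      rw [hw] at hw₂; injection hw₂ with hww; subst hww
      obtain ⟨hsub', hrep'⟩ := ih hsub hrep
      constructor
      · exact RTerm.SubAt.step (list_get?_set_self ts i w w' hw) hsub'
      · have := RTerm.ReplAt.step (f := f) (list_get?_set_self ts i w w' hw) hrep'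
        rwa [List.set_set, list_set_of_get? ts i w hw] at this

theorem aux_rew_symm {E : List (Pat F × Pat F)} {s t : RTerm F} (h : Rew E s t) : Rew E t s := by
  obtain ⟨l, r, hm, σ, p, hsub, hrep⟩ := h
  obtain ⟨h1, h2⟩ := aux_swap hsub hrep
  exact ⟨r, l, hm.symm, σ, p, h1, h2⟩

theorem aux_eqE_symm {E : List (Pat F × Pat F)} {s t : RTerm F} (h : EqE E s t) : EqE E t s := by
  induction h with
  | refl => exact eqe_refl
  | tail _ h2 ih => exact Relation.ReflTransGen.head (aux_rew_symm h2) ih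

theorem aux_rew_cases {E : List (Pat F × Pat F)} {f : F} {ws : List (RTerm F)} {v : RTerm F}
    (h : Rew E (RTerm.node f ws) v) :
    (∃ l r σ, ((l, r) ∈ E ∨ (r, l) ∈ E) ∧ Pat.subst σ l = RTerm.node f ws ∧ v = Pat.subst σ r) ∨
    (∃ i a b, ws[i]? = some a ∧ Rew E a b ∧ v = RTerm.node f (ws.set i b)) := by
  obtain ⟨l, r, hm, σ, p, hsub, hrep⟩ := h
  cases p with
  | nil =>
    obtain hl := aux_subAt_nil hsub
    obtain rfl := aux_replAt_nil hrep
    exact Or.inl ⟨l, r, σ, hm, hl, rfl⟩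
  | cons i p =>
    obtain ⟨w, hw, hsub'⟩ := aux_subAt_cons hsub
    obtain ⟨w₂, w', hw₂, hrep', rfl⟩ := aux_replAt_cons hrep
    rw [hw] at hw₂; injection hw₂ with hww; subst hww
    refine Or.inr ⟨i, w, w', hw, ?_, rfl⟩
    exact ⟨l, r, hm, σ, p, hsub', hrep'⟩

theorem aux_flat {ar : F → ℕ} {E : List (Pat F × Pat F)} (hE : ∀ e ∈ E, IsFlatEq ar e)
    {l r : Pat F} (hm : (l, r) ∈ E ∨ (r, l) ∈ E) :
    l.height = r.height ∧ l.height ≤ 1 ∧ (∀ v, Pat.HasVar v l ↔ Pat.HasVar v r) := by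
  rcases hm with h | h
  · obtain ⟨_, _, h1, h2, h3⟩ := hE _ h
    exact ⟨h1, h2, h3⟩
  · obtain ⟨_, _, h1, h2, h3⟩ := hE _ h
    exact ⟨h1.symm, by simp only [Prod.fst] at h1 h2 ⊢; omega, fun v => (h3 v).symm⟩

end Statement0Aux2

section Statement0Aux3

variable {F : Type}

/-! #### heights are preserved by flat rewriting -/

theorem aux_hsub_le (σ : ℕ → RTerm F) {l r : Pat F} (hh : l.height = r.height)
    (h1 : l.height ≤ 1) (hv : ∀ v, Pat.HasVar v l → Pat.HasVar v r) :
    (Pat.subst σ l).height ≤ (Pat.subst σ r).height := by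
  cases l with
  | var x =>
    have hx : Pat.HasVar x r := hv x Pat.HasVar.var
    have hr0 : r.height = 0 := by rw [← hh]; simp [Pat.height]
    rcases aux_pat_zero hr0 with ⟨y, rfl⟩ | ⟨c, rfl⟩
    · obtain rfl := aux_hasvar_var hx
      exact le_refl _
    · exact absurd hx aux_novar_nil
  | node f ps =>
    rw [subst_node']
    cases ps with
    | nil => rw [List.map_nil, height_node_nil]; exact Nat.zero_le _
    | cons p ps' =>
      have hl1 : (Pat.node f (p :: ps')).height = 1 := by
        have := aux_pat_child (f := f) (List.mem_cons_self (a := p) (l := ps'))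
        omega
      have hr1 : r.height = 1 := by omega
      obtain ⟨g, qs, rfl⟩ : ∃ g qs, r = Pat.node g qs := by
        cases r with
        | var y => simp [Pat.height] at hr1
        | node g qs => exact ⟨g, qs, rfl⟩
      have hqs : qs ≠ [] := by
        rintro rfl
        simp [Pat.height] at hr1
      rw [subst_node']
      apply aux_height_le
      intro u hu
      rcases List.mem_map.mp hu with ⟨q, hq, rfl⟩
      have hq0 : q.height = 0 := by
        have := aux_pat_child (f := f) hq
        omega
      rcases aux_pat_zero hq0 with ⟨x, rfl⟩ | ⟨c, rfl⟩
      · have hxr : Pat.HasVar x (Pat.node g qs) :=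
          hv x (Pat.HasVar.node hq Pat.HasVar.var)
        obtain ⟨j, hj⟩ := aux_hasvar_node (by omega) hxr
        have hmem : Pat.subst σ (Pat.var x) ∈ qs.map (Pat.subst σ) :=
          List.mem_map.mpr ⟨_, List.mem_of_getElem? hj, rfl⟩
        exact aux_height_mem (f := g) hmem
      · rw [subst_node', List.map_nil]
        have h0 : (RTerm.node c ([] : List (RTerm F))).height = 0 := height_node_nil c
        rw [h0]
        exact aux_height_pos (by simpa using hqs)

theorem aux_hsub_eq (σ : ℕ → RTerm F) {l r : Pat F} (hh : l.height = r.height)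
    (h1 : l.height ≤ 1) (hv : ∀ v, Pat.HasVar v l ↔ Pat.HasVar v r) :
    (Pat.subst σ l).height = (Pat.subst σ r).height :=
  Nat.le_antisymm (aux_hsub_le σ hh h1 fun v => (hv v).mp)
    (aux_hsub_le σ hh.symm (by omega) fun v => (hv v).mpr)

theorem aux_height_set {f : F} : ∀ (ws : List (RTerm F)) (i : ℕ) (a b : RTerm F),
    ws[i]? = some a → a.height = b.height →
    (RTerm.node f (ws.set i b)).height = (RTerm.node f ws).height
  | [], i, a, b, h, _ => by simp at h
  | w :: ws, 0, a, b, h, he => by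
      simp only [List.getElem?_cons_zero, Option.some.injEq] at h
      subst h
      rw [List.set_cons_zero, height_node_cons, height_node_cons, he]
  | w :: ws, i+1, a, b, h, he => by
      simp only [List.getElem?_cons_succ] at h
      rw [List.set_cons_succ, height_node_cons, height_node_cons,
        aux_height_set ws i a b h he]

theorem aux_rew_height {ar : F → ℕ} {E : List (Pat F × Pat F)}
    (hE : ∀ e ∈ E, IsFlatEq ar e) :
    ∀ (n : ℕ) (u v : RTerm F), sizeOf u ≤ n → Rew E u v → u.height = v.height := by
  intro n
  induction n with
  | zero =>
    intro u v hu _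
    cases u with
    | node f ws => rw [RTerm.node.sizeOf_spec] at hu; omega
  | succ n ih =>
    intro u v hu h
    cases u with
    | node f ws =>
      rcases aux_rew_cases h with ⟨l, r, σ, hm, hl, rfl⟩ | ⟨i, a, b, hget, hab, rfl⟩
      · obtain ⟨h1, h2, h3⟩ := aux_flat hE hm
        rw [← hl]
        exact aux_hsub_eq σ h1 h2 h3
      · have hmem := List.mem_of_getElem? hget
        have hsz : sizeOf a < sizeOf (RTerm.node f ws) := by
          rw [RTerm.node.sizeOf_spec]
          have := List.sizeOf_lt_of_mem hmem
          omega
        have hh := ih a b (by omega) hab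
        exact (aux_height_set ws i a b hget hh).symm

theorem aux_eqE_height {ar : F → ℕ} {E : List (Pat F × Pat F)}
    (hE : ∀ e ∈ E, IsFlatEq ar e) {u v : RTerm F} (h : EqE E u v) : u.height = v.height := by
  induction h with
  | refl => rfl
  | tail _ h2 ih => exact ih.trans (aux_rew_height hE (sizeOf _) _ _ (le_refl _) h2)

/-! #### constants are preserved -/

theorem aux_rew_const {ar : F → ℕ} {E : List (Pat F × Pat F)}
    (hE : ∀ e ∈ E, IsFlatEq ar e) {u v : RTerm F} (h : Rew E u v) (hc : u.IsConst) :
    v.IsConst := by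
  obtain ⟨c, rfl⟩ := hc
  rcases aux_rew_cases h with ⟨l, r, σ, hm, hl, rfl⟩ | ⟨i, a, b, hget, _, _⟩
  · obtain ⟨h1, h2, h3⟩ := aux_flat hE hm
    cases l with
    | var x =>
      have hx : Pat.HasVar x r := (h3 x).mp Pat.HasVar.var
      have hr0 : r.height = 0 := by rw [← h1]; simp [Pat.height]
      rcases aux_pat_zero hr0 with ⟨y, rfl⟩ | ⟨d, rfl⟩
      · obtain rfl := aux_hasvar_var hx
        rw [hl]
        exact ⟨c, rfl⟩
      · exact absurd hx aux_novar_nil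
    | node f₂ ps =>
      rw [subst_node'] at hl
      injection hl with hf hmap
      obtain rfl : ps = [] := List.map_eq_nil_iff.mp hmap
      have hr0 : r.height = 0 := by rw [← h1]; simp [Pat.height]
      rcases aux_pat_zero hr0 with ⟨y, rfl⟩ | ⟨d, rfl⟩
      · exact absurd ((h3 y).mpr Pat.HasVar.var) aux_novar_nil
      · rw [subst_node', List.map_nil]
        exact ⟨d, rfl⟩
  · simp at hget

theorem aux_eqE_const {ar : F → ℕ} {E : List (Pat F × Pat F)}
    (hE : ∀ e ∈ E, IsFlatEq ar e) {u v : RTerm F} (h : EqE E u v) (hc : u.IsConst) :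
    v.IsConst := by
  induction h with
  | refl => exact hc
  | tail _ h2 ih => exact aux_rew_const hE h2 ih

theorem aux_eqE_const_iff {ar : F → ℕ} {E : List (Pat F × Pat F)}
    (hE : ∀ e ∈ E, IsFlatEq ar e) {u v : RTerm F} (h : EqE E u v) :
    u.IsConst ↔ v.IsConst :=
  ⟨aux_eqE_const hE h, aux_eqE_const hE (aux_eqE_symm h)⟩

/-! #### congruence -/

theorem aux_rew_congr {E : List (Pat F × Pat F)} {f : F} {pre suf : List (RTerm F)}
    {a b : RTerm F} (h : Rew E a b) :
    Rew E (RTerm.node f (pre ++ a :: suf)) (RTerm.node f (pre ++ b :: suf)) := by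
  obtain ⟨l, r, hm, σ, p, h1, h2⟩ := h
  refine ⟨l, r, hm, σ, pre.length :: p,
    RTerm.SubAt.step (list_get?_append_cons pre a suf) h1, ?_⟩
  have := RTerm.ReplAt.step (f := f) (list_get?_append_cons pre a suf) h2
  rwa [list_set_append_cons] at this

theorem aux_eqE_congr1 {E : List (Pat F × Pat F)} {f : F} {pre suf : List (RTerm F)}
    {a b : RTerm F} (h : EqE E a b) :
    EqE E (RTerm.node f (pre ++ a :: suf)) (RTerm.node f (pre ++ b :: suf)) := by
  induction h with
  | refl => exact eqe_refl
  | tail _ h2 ih => exact Relation.ReflTransGen.tail ih (aux_rew_congr h2)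

theorem aux_eqE_congr {E : List (Pat F × Pat F)} (f : F) :
    ∀ {ts us : List (RTerm F)}, List.Forall₂ (EqE E) ts us →
    ∀ pre, EqE E (RTerm.node f (pre ++ ts)) (RTerm.node f (pre ++ us)) := by
  intro ts us h
  induction h with
  | nil => intro _; exact eqe_refl
  | @cons a b l₁ l₂ h₁ _ ih =>
    intro pre
    have step1 : EqE E (RTerm.node f (pre ++ a :: l₁)) (RTerm.node f (pre ++ b :: l₁)) :=
      aux_eqE_congr1 h₁
    have step2 := ih (pre ++ [b])
    simp only [List.append_assoc, List.singleton_append] at step2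
    exact eqe_trans step1 step2

theorem aux_forall₂ {E : List (Pat F × Pat F)} : ∀ (ts us : List (RTerm F)),
    ts.length = us.length →
    (∀ (i : ℕ) a b, ts[i]? = some a → us[i]? = some b → EqE E a b) →
    List.Forall₂ (EqE E) ts us
  | [], [], _, _ => List.Forall₂.nil
  | [], _ :: _, h, _ => by simp at h
  | _ :: _, [], h, _ => by simp at h
  | t :: ts, u :: us, h, hp =>
    List.Forall₂.cons (hp 0 t u rfl rfl)
      (aux_forall₂ ts us (by simpa using h)
        (fun i a b h1 h2 => hp (i + 1) a b (by simpa using h1) (by simpa using h2)))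

theorem aux_congr_get {E : List (Pat F × Pat F)} (f : F) {ts us : List (RTerm F)}
    (hlen : ts.length = us.length)
    (hp : ∀ (i : ℕ) a b, ts[i]? = some a → us[i]? = some b → EqE E a b) :
    EqE E (RTerm.node f ts) (RTerm.node f us) := by
  have := aux_eqE_congr f (aux_forall₂ ts us hlen hp) []
  simpa using this

end Statement0Aux3

section Statement0Aux4

variable {F : Type}

/-- The list of arguments of a term. -/
def argsOf : RTerm F → List (RTerm F)
  | .node _ ts => ts

@[simp] theorem argsOf_node (f : F) (ts : List (RTerm F)) :
    argsOf (RTerm.node f ts) = ts := rfl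

/-- Non-constant arguments persist (up to `=E`) through one rewrite step. -/
theorem aux_persist_rew {ar : F → ℕ} {E : List (Pat F × Pat F)}
    (hE : ∀ e ∈ E, IsFlatEq ar e) {f : F} {ws : List (RTerm F)} {v : RTerm F}
    (h : Rew E (RTerm.node f ws) v) {i : ℕ} {a : RTerm F}
    (hget : ws[i]? = some a) (hnc : ¬ a.IsConst) :
    ∃ (j : ℕ), ∃ b, (argsOf v)[j]? = some b ∧ EqE E a b := by
  rcases aux_rew_cases h with ⟨l, r, σ, hm, hl, rfl⟩ | ⟨i₀, a₀, b₀, hget₀, hab, rfl⟩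
  · obtain ⟨h1, h2, h3⟩ := aux_flat hE hm
    cases l with
    | var x =>
      have hx : Pat.HasVar x r := (h3 x).mp Pat.HasVar.var
      have hr0 : r.height = 0 := by rw [← h1]; simp [Pat.height]
      rcases aux_pat_zero hr0 with ⟨y, rfl⟩ | ⟨d, rfl⟩
      · obtain rfl := aux_hasvar_var hx
        rw [hl]
        exact ⟨i, a, by simpa using hget, eqe_refl⟩
      · exact absurd hx aux_novar_nil
    | node f₂ ps =>
      rw [subst_node'] at hl
      injection hl with hf hmap
      subst hf
      subst hmap
      rw [List.getElem?_map] at hget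
      obtain ⟨q, hq, hqa⟩ := Option.map_eq_some_iff.mp hget
      have hq0 : q.height = 0 := by
        have := aux_pat_child (f := f₂) (List.mem_of_getElem? hq)
        omega
      rcases aux_pat_zero hq0 with ⟨x, rfl⟩ | ⟨c, rfl⟩
      · have hxl : Pat.HasVar x (Pat.node f₂ ps) := aux_hasvar_of_get hq
        have hxr := (h3 x).mp hxl
        have hl1 : (Pat.node f₂ ps).height = 1 := by
          have := aux_pat_child (f := f₂) (List.mem_of_getElem? hq)
          omega
        have hr1 : r.height = 1 := by omega
        obtain ⟨g, qs, rfl⟩ : ∃ g qs, r = Pat.node g qs := by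
          cases r with
          | var y => simp [Pat.height] at hr1
          | node g qs => exact ⟨g, qs, rfl⟩
        obtain ⟨j, hj⟩ := aux_hasvar_node (by omega) hxr
        refine ⟨j, a, ?_, eqe_refl⟩
        rw [subst_node', argsOf_node, List.getElem?_map, hj]
        simp [← hqa, subst_var']
      · rw [← hqa, subst_node', List.map_nil] at hnc
        exact absurd ⟨c, rfl⟩ hnc
  · by_cases hii : i = i₀
    · subst hii
      obtain rfl : a = a₀ := by rw [hget] at hget₀; injection hget₀
      exact ⟨i, b₀, by simpa using list_get?_set_self ws i a b₀ hget, eqe_single hab⟩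
    · refine ⟨i, a, ?_, eqe_refl⟩
      rw [argsOf_node, List.getElem?_set_ne (Ne.symm hii)]
      exact hget

/-- Non-constant arguments persist (up to `=E`) through `=E`. -/
theorem aux_persist {ar : F → ℕ} {E : List (Pat F × Pat F)}
    (hE : ∀ e ∈ E, IsFlatEq ar e) :
    ∀ {u v : RTerm F}, EqE E u v → ∀ (i : ℕ) a, (argsOf u)[i]? = some a → ¬ a.IsConst →
      ∃ (j : ℕ), ∃ b, (argsOf v)[j]? = some b ∧ EqE E a b := by
  intro u v h
  induction h using Relation.ReflTransGen.head_induction_on with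
  | refl => intro i a h1 _; exact ⟨i, a, h1, eqe_refl⟩
  | @head x c hxc _ ih =>
    intro i a h1 h2
    cases x with
    | node f ws =>
      obtain ⟨j, b, hb, hab⟩ := aux_persist_rew hE hxc (by simpa using h1) h2
      have hbc : ¬ b.IsConst := fun hbc => h2 (aux_eqE_const hE (aux_eqE_symm hab) hbc)
      obtain ⟨j', b', hb', hbb'⟩ := ih j b hb hbc
      exact ⟨j', b', hb', eqe_trans hab hbb'⟩

end Statement0Aux4

section Statement0Main

variable {F : Type}

/-- Relation between an argument of a term in the derivation and its replacement. -/
def ArgRel (E : List (Pat F × Pat F)) (ss ts ss' ts' : List (RTerm F))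
    (a a' : RTerm F) : Prop :=
  (a.IsConst ∧ a'.IsConst ∧ EqE E a a') ∨
  (¬ a.IsConst ∧ ¬ a'.IsConst ∧
    ((∃ (k : ℕ), ∃ x x', ss[k]? = some x ∧ ss'[k]? = some x' ∧ EqE E a x ∧ EqE E a' x') ∨
     (∃ (k : ℕ), ∃ x x', ts[k]? = some x ∧ ts'[k]? = some x' ∧ EqE E a x ∧ EqE E a' x')))

variable {ar : F → ℕ} {E : List (Pat F × Pat F)} {f g : F} {ss ts ss' ts' : List (RTerm F)}

theorem argrel_left (hE : ∀ e ∈ E, IsFlatEq ar e) {a c a' : RTerm F}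
    (h : EqE E a c) (hr : ArgRel E ss ts ss' ts' a a') : ArgRel E ss ts ss' ts' c a' := by
  rcases hr with ⟨h1, h2, h3⟩ | ⟨h1, h2, h3⟩
  · exact Or.inl ⟨aux_eqE_const hE h h1, h2, eqe_trans (aux_eqE_symm h) h3⟩
  · refine Or.inr ⟨fun hc => h1 ((aux_eqE_const_iff hE h).mpr hc), h2, ?_⟩
    rcases h3 with ⟨k, x, x', hx, hx', hax, hax'⟩ | ⟨k, x, x', hx, hx', hax, hax'⟩
    · exact Or.inl ⟨k, x, x', hx, hx', eqe_trans (aux_eqE_symm h) hax, hax'⟩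
    · exact Or.inr ⟨k, x, x', hx, hx', eqe_trans (aux_eqE_symm h) hax, hax'⟩

theorem argrel_funct (hE : ∀ e ∈ E, IsFlatEq ar e)
    (hlen_s : ss.length = ss'.length) (hlen_t : ts.length = ts'.length)
    (hst : ∀ (k l : ℕ) si si' tj tj', ss[k]? = some si → ss'[k]? = some si' →
      ts[l]? = some tj → ts'[l]? = some tj' → (EqE E si' tj' ↔ EqE E si tj))
    (H : EqE E (RTerm.node f ss) (RTerm.node g ts))
    {a a' b b' : RTerm F} (ha : ArgRel E ss ts ss' ts' a a')
    (hb : ArgRel E ss ts ss' ts' b b') (hab : EqE E a b) : EqE E a' b' := by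
  rcases ha with ⟨ha1, ha2, ha3⟩ | ⟨ha1, ha2, ha3⟩
  · rcases hb with ⟨hb1, hb2, hb3⟩ | ⟨hb1, _, _⟩
    · exact eqe_trans (aux_eqE_symm ha3) (eqe_trans hab hb3)
    · exact absurd (aux_eqE_const hE hab ha1) hb1
  · rcases hb with ⟨hb1, _, _⟩ | ⟨hb1, hb2, hb3⟩
    · exact absurd (aux_eqE_const hE (aux_eqE_symm hab) hb1) ha1
    · rcases ha3 with ⟨k, x, x', hx, hx', hax, hax'⟩ | ⟨k, x, x', hx, hx', hax, hax'⟩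
      · rcases hb3 with ⟨m, y, y', hy, hy', hby, hby'⟩ | ⟨m, y, y', hy, hy', hby, hby'⟩
        · -- (s, s)
          have hxy : EqE E x y := eqe_trans (aux_eqE_symm hax) (eqe_trans hab hby)
          have hxnc : ¬ x.IsConst := fun hc => ha1 (aux_eqE_const hE (aux_eqE_symm hax) hc)
          obtain ⟨j, z, hz, hxz⟩ :=
            aux_persist hE H k x (by simpa using hx) hxnc
          rw [argsOf_node] at hz
          have hj : j < ts'.length := hlen_t ▸ (List.getElem?_eq_some_iff.mp hz).1
          obtain ⟨z', hz'⟩ := list_get?_of_lt ts' j hj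
          have h1 : EqE E x' z' := (hst k j x x' z z' hx hx' hz hz').mpr hxz
          have h2 : EqE E y' z' := (hst m j y y' z z' hy hy' hz hz').mpr
            (eqe_trans (aux_eqE_symm hxy) hxz)
          exact eqe_trans hax'
            (eqe_trans h1 (eqe_trans (aux_eqE_symm h2) (aux_eqE_symm hby')))
        · -- (s, t)
          have hxy : EqE E x y := eqe_trans (aux_eqE_symm hax) (eqe_trans hab hby)
          have h1 : EqE E x' y' := (hst k m x x' y y' hx hx' hy hy').mpr hxy
          exact eqe_trans hax' (eqe_trans h1 (aux_eqE_symm hby'))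
      · rcases hb3 with ⟨m, y, y', hy, hy', hby, hby'⟩ | ⟨m, y, y', hy, hy', hby, hby'⟩
        · -- (t, s)
          have hxy : EqE E x y := eqe_trans (aux_eqE_symm hax) (eqe_trans hab hby)
          have h1 : EqE E y' x' := (hst m k y y' x x' hy hy' hx hx').mpr (aux_eqE_symm hxy)
          exact eqe_trans hax' (eqe_trans (aux_eqE_symm h1) (aux_eqE_symm hby'))
        · -- (t, t)
          have hxy : EqE E x y := eqe_trans (aux_eqE_symm hax) (eqe_trans hab hby)
          have hxnc : ¬ x.IsConst := fun hc => ha1 (aux_eqE_const hE (aux_eqE_symm hax) hc)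
          obtain ⟨j, z, hz, hxz⟩ :=
            aux_persist hE (aux_eqE_symm H) k x (by simpa using hx) hxnc
          rw [argsOf_node] at hz
          have hj : j < ss'.length := hlen_s ▸ (List.getElem?_eq_some_iff.mp hz).1
          obtain ⟨z', hz'⟩ := list_get?_of_lt ss' j hj
          have h1 : EqE E z' x' := (hst j k z z' x x' hz hz' hx hx').mpr (aux_eqE_symm hxz)
          have h2 : EqE E z' y' := (hst j m z z' y y' hz hz' hy hy').mpr
            (eqe_trans (aux_eqE_symm hxz) hxy)
          exact eqe_trans hax'
            (eqe_trans (aux_eqE_symm h1) (eqe_trans h2 (aux_eqE_symm hby')))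

/-- The simulation relation. -/
def SimRel (E : List (Pat F × Pat F)) (ss ts ss' ts' : List (RTerm F))
    (w w' : RTerm F) : Prop :=
  ∃ (h : F) (as as' : List (RTerm F)), w = RTerm.node h as ∧ w' = RTerm.node h as' ∧
    as.length = as'.length ∧
    ∀ (i : ℕ) a a', as[i]? = some a → as'[i]? = some a' → ArgRel E ss ts ss' ts' a a'

open Classical in
/-- Choice of a substitution matching the simulated arguments. -/
noncomputable def sigma' (σ : ℕ → RTerm F) (ps : List (Pat F)) (as' : List (RTerm F)) :
    ℕ → RTerm F :=
  fun x => if hx : ∃ a', ∃ i : ℕ, ps[i]? = some (Pat.var x) ∧ as'[i]? = some a'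
    then hx.choose else σ x

theorem sigma'_spec {σ : ℕ → RTerm F} {ps : List (Pat F)} {as' : List (RTerm F)} {x : ℕ}
    (hx : ∃ a', ∃ i : ℕ, ps[i]? = some (Pat.var x) ∧ as'[i]? = some a') :
    ∃ i₀ : ℕ, ps[i₀]? = some (Pat.var x) ∧ as'[i₀]? = some (sigma' σ ps as' x) := by
  unfold sigma'
  rw [dif_pos hx]
  obtain ⟨i₀, h1, h2⟩ := hx.choose_spec
  exact ⟨i₀, h1, h2⟩

theorem sim_step (hE : ∀ e ∈ E, IsFlatEq ar e)
    (hlen_s : ss.length = ss'.length) (hlen_t : ts.length = ts'.length)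
    (hst : ∀ (k l : ℕ) si si' tj tj', ss[k]? = some si → ss'[k]? = some si' →
      ts[l]? = some tj → ts'[l]? = some tj' → (EqE E si' tj' ↔ EqE E si tj))
    (H : EqE E (RTerm.node f ss) (RTerm.node g ts))
    {w w' v : RTerm F} (hsim : SimRel E ss ts ss' ts' w w') (hr : Rew E w v) :
    ∃ v', EqE E w' v' ∧ SimRel E ss ts ss' ts' v v' := by
  obtain ⟨h0, as, as', rfl, rfl, hlen, hrel⟩ := hsim
  rcases aux_rew_cases hr with ⟨l, r, σ, hm, hl, rfl⟩ | ⟨i, a, b, hget, hab, rfl⟩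
  · obtain ⟨hh, h1, h3⟩ := aux_flat hE hm
    cases l with
    | var x =>
      have hx : Pat.HasVar x r := (h3 x).mp Pat.HasVar.var
      have hr0 : r.height = 0 := by rw [← hh]; simp [Pat.height]
      rcases aux_pat_zero hr0 with ⟨y, rfl⟩ | ⟨c, rfl⟩
      · obtain rfl := aux_hasvar_var hx
        refine ⟨RTerm.node h0 as', eqe_refl, ?_⟩
        rw [hl]
        exact ⟨h0, as, as', rfl, rfl, hlen, hrel⟩
      · exact absurd hx aux_novar_nil
    | node f₂ ps =>
      rw [subst_node'] at hl
      injection hl with hf hmap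
      subst hf
      subst hmap
      cases ps with
      | nil =>
        obtain rfl : as' = [] := List.length_eq_zero_iff.mp (by simpa using hlen.symm)
        have hr0 : r.height = 0 := by rw [← hh]; simp [Pat.height]
        rcases aux_pat_zero hr0 with ⟨y, rfl⟩ | ⟨d, rfl⟩
        · exact absurd ((h3 y).mpr Pat.HasVar.var) aux_novar_nil
        · refine ⟨Pat.subst σ (Pat.node d []), ?_, ?_⟩
          · refine eqe_single ⟨Pat.node f₂ [], Pat.node d [], hm, σ, [], ?_, ?_⟩
            · rw [subst_node', List.map_nil]
              exact RTerm.SubAt.refl _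
            · exact RTerm.ReplAt.here _ _
          · rw [subst_node', List.map_nil]
            exact ⟨d, [], [], rfl, rfl, rfl, by intro i a a' h1 _; simp at h1⟩
      | cons p ps' =>
        have hl1 : (Pat.node f₂ (p :: ps')).height = 1 := by
          have := aux_pat_child (f := f₂) (List.mem_cons_self (a := p) (l := ps'))
          omega
        have hr1 : r.height = 1 := by omega
        obtain ⟨g₂, qs, rfl⟩ : ∃ g₂ qs, r = Pat.node g₂ qs := by
          cases r with
          | var y => simp [Pat.height] at hr1
          | node g₂ qs => exact ⟨g₂, qs, rfl⟩
        have key1 : ∀ x (i : ℕ), (p :: ps')[i]? = some (Pat.var x) →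
            ArgRel E ss ts ss' ts' (σ x) (sigma' σ (p :: ps') as' x) := by
          intro x i hi
          have hilt : i < as'.length := by
            rw [← hlen, List.length_map]
            exact (List.getElem?_eq_some_iff.mp hi).1
          obtain ⟨a', ha'⟩ := list_get?_of_lt as' i hilt
          obtain ⟨i₀, hv1, hv2⟩ := sigma'_spec (σ := σ) ⟨a', i, hi, ha'⟩
          have has : ((p :: ps').map (Pat.subst σ))[i₀]? = some (σ x) := by
            rw [List.getElem?_map, hv1, Option.map_some, subst_var']
          exact hrel i₀ _ _ has hv2
        refine ⟨Pat.subst (sigma' σ (p :: ps') as') (Pat.node g₂ qs), ?_, ?_⟩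
        · have step1 : EqE E (RTerm.node f₂ as')
              (Pat.subst (sigma' σ (p :: ps') as') (Pat.node f₂ (p :: ps'))) := by
            rw [subst_node']
            apply aux_congr_get
            · rw [List.length_map, ← hlen, List.length_map]
            · intro i a' u hga' hgu
              rw [List.getElem?_map] at hgu
              obtain ⟨q, hq, rfl⟩ := Option.map_eq_some_iff.mp hgu
              have hilt : i < ((p :: ps').map (Pat.subst σ)).length := by
                rw [hlen]
                exact (List.getElem?_eq_some_iff.mp hga').1
              obtain ⟨a, ha⟩ := list_get?_of_lt _ i hilt
              have haq : Pat.subst σ q = a := by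
                rw [List.getElem?_map, hq, Option.map_some] at ha
                injection ha
              have hq0 : q.height = 0 := by
                have := aux_pat_child (f := f₂) (List.mem_of_getElem? hq)
                omega
              rcases aux_pat_zero hq0 with ⟨x, rfl⟩ | ⟨c, rfl⟩
              · rw [subst_var']
                have harel : ArgRel E ss ts ss' ts' a a' := hrel i a a' ha hga'
                have harel2 := key1 x i hq
                refine argrel_funct hE hlen_s hlen_t hst H harel harel2 ?_
                rw [subst_var'] at haq
                rw [← haq]
                exact eqe_refl
              · rw [subst_node', List.map_nil]
                rw [subst_node', List.map_nil] at haq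
                rcases hrel i a a' ha hga' with ⟨_, _, h5⟩ | ⟨hnc, _, _⟩
                · exact aux_eqE_symm (haq ▸ h5)
                · exact absurd ⟨c, haq.symm⟩ hnc
          have step2 : Rew E (Pat.subst (sigma' σ (p :: ps') as') (Pat.node f₂ (p :: ps')))
              (Pat.subst (sigma' σ (p :: ps') as') (Pat.node g₂ qs)) :=
            ⟨_, _, hm, _, [], RTerm.SubAt.refl _, RTerm.ReplAt.here _ _⟩
          exact Relation.ReflTransGen.tail step1 step2
        · rw [subst_node', subst_node']
          refine ⟨g₂, _, _, rfl, rfl, by simp, ?_⟩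
          intro j u u' hgu hgu'
          rw [List.getElem?_map] at hgu hgu'
          obtain ⟨q1, hq1, hu⟩ := Option.map_eq_some_iff.mp hgu
          obtain ⟨q2, hq2, hu'⟩ := Option.map_eq_some_iff.mp hgu'
          have hq12 : q1 = q2 := by rw [hq1] at hq2; injection hq2
          subst hq12
          subst hu
          subst hu'
          have hq0 : q1.height = 0 := by
            have := aux_pat_child (f := g₂) (List.mem_of_getElem? hq1)
            omega
          rcases aux_pat_zero hq0 with ⟨x, rfl⟩ | ⟨c, rfl⟩
          · rw [subst_var', subst_var']
            have hvr : Pat.HasVar x (Pat.node g₂ qs) := aux_hasvar_of_get hq1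
            obtain ⟨i, hi⟩ := aux_hasvar_node (by omega) ((h3 x).mpr hvr)
            exact key1 x i hi
          · rw [subst_node', subst_node', List.map_nil]
            exact Or.inl ⟨⟨c, rfl⟩, ⟨c, rfl⟩, eqe_refl⟩
  · refine ⟨RTerm.node h0 as', eqe_refl, ⟨h0, _, as', rfl, rfl, by simpa using hlen, ?_⟩⟩
    intro j u u' hgu hgu'
    by_cases hj : j = i
    · subst hj
      have hbget : (as.set j b)[j]? = some b := list_get?_set_self as j a b hget
      obtain rfl : u = b := by rw [hbget] at hgu; exact (Option.some.inj hgu).symm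
      exact argrel_left hE (eqe_single hab) (hrel j a u' hget hgu')
    · rw [List.getElem?_set_ne (Ne.symm hj)] at hgu
      exact hrel j u u' hgu hgu'

theorem sim_steps (hE : ∀ e ∈ E, IsFlatEq ar e)
    (hlen_s : ss.length = ss'.length) (hlen_t : ts.length = ts'.length)
    (hst : ∀ (k l : ℕ) si si' tj tj', ss[k]? = some si → ss'[k]? = some si' →
      ts[l]? = some tj → ts'[l]? = some tj' → (EqE E si' tj' ↔ EqE E si tj))
    (H : EqE E (RTerm.node f ss) (RTerm.node g ts)) :
    ∀ {w v : RTerm F}, EqE E w v → ∀ w', SimRel E ss ts ss' ts' w w' →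
      ∃ v', EqE E w' v' ∧ SimRel E ss ts ss' ts' v v' := by
  intro w v hwv
  induction hwv using Relation.ReflTransGen.head_induction_on with
  | refl => intro w' hsw; exact ⟨w', eqe_refl, hsw⟩
  | @head x c hxc _ ih =>
    intro w' hsw
    obtain ⟨c', hc1, hc2⟩ := sim_step hE hlen_s hlen_t hst H hsw hxc
    obtain ⟨v', hv1, hv2⟩ := ih c' hc2
    exact ⟨v', eqe_trans hc1 hv1, hv2⟩

theorem main_dir (hE : ∀ e ∈ E, IsFlatEq ar e)
    (hlen_s : ss.length = ss'.length) (hlen_t : ts.length = ts'.length)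
    (hs : ∀ (k : ℕ) si si', ss[k]? = some si → ss'[k]? = some si' →
      (si.IsConst ↔ si'.IsConst) ∧ (si.IsConst → si'.IsConst → EqE E si si'))
    (ht : ∀ (k : ℕ) tj tj', ts[k]? = some tj → ts'[k]? = some tj' →
      (tj.IsConst ↔ tj'.IsConst) ∧ (tj.IsConst → tj'.IsConst → EqE E tj tj'))
    (hst : ∀ (k l : ℕ) si si' tj tj', ss[k]? = some si → ss'[k]? = some si' →
      ts[l]? = some tj → ts'[l]? = some tj' → (EqE E si' tj' ↔ EqE E si tj))
    (H : EqE E (RTerm.node f ss) (RTerm.node g ts)) :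
    EqE E (RTerm.node f ss') (RTerm.node g ts') := by
  have hsim0 : SimRel E ss ts ss' ts' (RTerm.node f ss) (RTerm.node f ss') := by
    refine ⟨f, ss, ss', rfl, rfl, hlen_s, ?_⟩
    intro i a a' h1 h2
    obtain ⟨hc, he⟩ := hs i a a' h1 h2
    by_cases hca : a.IsConst
    · exact Or.inl ⟨hca, hc.mp hca, he hca (hc.mp hca)⟩
    · exact Or.inr ⟨hca, fun hx => hca (hc.mpr hx),
        Or.inl ⟨i, a, a', h1, h2, eqe_refl, eqe_refl⟩⟩
  obtain ⟨t'', hst1, hst2⟩ :=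
    sim_steps hE hlen_s hlen_t hst H H (RTerm.node f ss') hsim0
  obtain ⟨g₂, as, bs, hgt, rfl, hlen2, hrel2⟩ := hst2
  injection hgt with hg has
  subst hg
  subst has
  have hfinal : EqE E (RTerm.node g bs) (RTerm.node g ts') := by
    apply aux_congr_get
    · omega
    · intro j b y' hb hy'
      have hj : j < ts.length := by
        have := (List.getElem?_eq_some_iff.mp hb).1
        omega
      obtain ⟨y, hy⟩ := list_get?_of_lt ts j hj
      have ha1 : ArgRel E ss ts ss' ts' y b := hrel2 j y b hy hb
      have hjlt : j < ts'.length := hlen_t ▸ hj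
      have ha2 : ArgRel E ss ts ss' ts' y y' := by
        obtain ⟨hc, he⟩ := ht j y y' hy hy'
        by_cases hcy : y.IsConst
        · exact Or.inl ⟨hcy, hc.mp hcy, he hcy (hc.mp hcy)⟩
        · exact Or.inr ⟨hcy, fun hx => hcy (hc.mpr hx),
            Or.inr ⟨j, y, y', hy, hy', eqe_refl, eqe_refl⟩⟩
      exact argrel_funct hE hlen_s hlen_t hst H ha1 ha2 eqe_refl
  exact eqe_trans hst1 hfinal

end Statement0Main

/-- Let `E` be a flat theory, `s = f(s1,…,sn)`, `t = g(t1,…,tm)`,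
`s' = f(s1',…,sn')`, `t' = g(t1',…,tm')` ground terms such that corresponding
`s_i, s_i'` (resp. `t_j, t_j'`) are simultaneously constants and then `E`-equal,
and `s_i' =E t_j' ↔ s_i =E t_j` for all `i, j`.  Then `s =E t ↔ s' =E t'`. -/
theorem flat_theory_replacement {F : Type} (ar : F → ℕ) (E : List (Pat F × Pat F))
    (hE : ∀ e ∈ E, IsFlatEq ar e)
    (f g : F) (ss ts ss' ts' : List (RTerm F))
    (hwf₁ : RTerm.WF ar (RTerm.node f ss)) (hwf₂ : RTerm.WF ar (RTerm.node g ts))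
    (hwf₃ : RTerm.WF ar (RTerm.node f ss')) (hwf₄ : RTerm.WF ar (RTerm.node g ts'))
    (hs : ∀ (k : ℕ) si si', ss[k]? = some si → ss'[k]? = some si' →
      (RTerm.IsConst si ↔ RTerm.IsConst si') ∧
      (RTerm.IsConst si → RTerm.IsConst si' → EqE E si si'))
    (ht : ∀ (k : ℕ) tj tj', ts[k]? = some tj → ts'[k]? = some tj' →
      (RTerm.IsConst tj ↔ RTerm.IsConst tj') ∧
      (RTerm.IsConst tj → RTerm.IsConst tj' → EqE E tj tj'))
    (hst : ∀ (k l : ℕ) si si' tj tj', ss[k]? = some si → ss'[k]? = some si' →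
      ts[l]? = some tj → ts'[l]? = some tj' →
      (EqE E si' tj' ↔ EqE E si tj)) :
    EqE E (RTerm.node f ss) (RTerm.node g ts) ↔
      EqE E (RTerm.node f ss') (RTerm.node g ts') := by
  have hlen_s : ss.length = ss'.length := by
    cases hwf₁ with | node h1 _ => cases hwf₃ with | node h3 _ => rw [h1, h3]
  have hlen_t : ts.length = ts'.length := by
    cases hwf₂ with | node h2 _ => cases hwf₄ with | node h4 _ => rw [h2, h4]
  constructor
  · exact main_dir hE hlen_s hlen_t hs ht hst
  · intro H
    have hs' : ∀ (k : ℕ) si si', ss'[k]? = some si → ss[k]? = some si' →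
        (si.IsConst ↔ si'.IsConst) ∧ (si.IsConst → si'.IsConst → EqE E si si') :=
      fun k a b h1 h2 => ⟨(hs k b a h2 h1).1.symm,
        fun hc1 hc2 => aux_eqE_symm ((hs k b a h2 h1).2 hc2 hc1)⟩
    have ht' : ∀ (k : ℕ) tj tj', ts'[k]? = some tj → ts[k]? = some tj' →
        (tj.IsConst ↔ tj'.IsConst) ∧ (tj.IsConst → tj'.IsConst → EqE E tj tj') :=
      fun k a b h1 h2 => ⟨(ht k b a h2 h1).1.symm,
        fun hc1 hc2 => aux_eqE_symm ((ht k b a h2 h1).2 hc2 hc1)⟩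
    have hst' : ∀ (k l : ℕ) si si' tj tj', ss'[k]? = some si → ss[k]? = some si' →
        ts'[l]? = some tj → ts[l]? = some tj' → (EqE E si' tj' ↔ EqE E si tj) :=
      fun k l a a' b b' h1 h2 h3 h4 => (hst k l a' a b' b h2 h1 h4 h3).symm
    exact main_dir hE hlen_s.symm hlen_t.symm hs' ht' hst' H


end TreeAut
end

section
/- Every language recognized by a TAGED is recognized by some TAG^∧ whose global constraint is a conjunction of atoms of the forms q ≈ q' and q ≉ q'; moreover the inclusion of language classes is strict: over the signature Σ = {a:0, s:1, f:2}, the language of terms f(s^{n1}(a), f(s^{n2}(a), …, f(s^{nk}(a), a)…)) with k ≥ 0 and the natural numbers n1,…,nk pairwise distinct is recognized by such a TAG^∧ but is not recognized by any TAGED. -/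
set_option maxHeartbeats 1000000

namespace TreeAut


/-! ### Auxiliary generic lemmas -/

lemma map_node {F G : Type} (g : F → G) (f : F) (ts : List (RTerm F)) :
    RTerm.map g (RTerm.node f ts) = RTerm.node (g f) (ts.map (RTerm.map g)) := by
  rw [RTerm.map]
  congr 1
  simp

lemma term_node {F Q : Type} (ρ : Rule F Q) (rs : List (Run F Q)) :
    Run.term (RTerm.node ρ rs) = RTerm.node ρ.sym (rs.map Run.term) := map_node _ _ _

lemma state_node {F Q : Type} (ρ : Rule F Q) (rs : List (Run F Q)) :
    Run.state (RTerm.node ρ rs) = ρ.res := rfl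

lemma eqE_nil {F : Type} {s t : RTerm F} : EqE ([] : List (Pat F × Pat F)) s t ↔ s = t := by
  constructor
  · intro h
    induction h with
    | refl => rfl
    | tail _ hst ih =>
      rcases hst with ⟨l, r, hmem, _⟩
      simp at hmem
  · rintro rfl
    exact Relation.ReflTransGen.refl

lemma subAt_nil {F : Type} {t s : RTerm F} (h : RTerm.SubAt t [] s) : s = t := by
  cases h; rfl

lemma subAt_cons {F : Type} {f : F} {ts : List (RTerm F)} {i : ℕ} {p : List ℕ} {s : RTerm F}
    (h : RTerm.SubAt (RTerm.node f ts) (i :: p) s) :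
    ∃ u, ts[i]? = some u ∧ RTerm.SubAt u p s := by
  cases h with
  | step hget hsub => exact ⟨_, hget, hsub⟩

lemma subAt_unique {F : Type} {t : RTerm F} {p : List ℕ} {s s' : RTerm F}
    (h : RTerm.SubAt t p s) (h' : RTerm.SubAt t p s') : s = s' := by
  induction h generalizing s' with
  | refl => exact (subAt_nil h').symm
  | step hget hsub ih =>
    rcases subAt_cons h' with ⟨u', hget', hsub'⟩
    rw [hget] at hget'
    cases hget'
    exact ih hsub'

lemma subAt_trans {F : Type} {t u s : RTerm F} {p q : List ℕ}
    (h : RTerm.SubAt t p u) (h' : RTerm.SubAt u q s) : RTerm.SubAt t (p ++ q) s := by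
  induction h with
  | refl => exact h'
  | step hget hsub ih => exact RTerm.SubAt.step hget (ih h')

lemma isRun_subAt {F Q : Type} {Δ : List (Rule F Q)} {E : List (Pat F × Pat F)}
    {r s : Run F Q} {p : List ℕ}
    (hs : RTerm.SubAt r p s) : IsRun Δ E r → IsRun Δ E s := by
  induction hs with
  | refl => exact id
  | step hget hsub ih =>
    intro h
    cases h with
    | node h1 h2 h3 h4 h5 => exact ih (h3 _ (List.mem_of_getElem? hget))

lemma iter1_inj : Function.Injective iter1 := by
  intro m n h
  induction m generalizing n with
  | zero => cases n with
    | zero => rfl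
    | succ n => simp [iter1] at h
  | succ m ih =>
    cases n with
    | zero => simp [iter1] at h
    | succ n =>
      simp only [iter1, RTerm.node.injEq, List.cons.injEq, and_true, true_and] at h
      exact congrArg _ (ih h)

lemma chain_inj : Function.Injective chain := by
  intro xs ys h
  induction xs generalizing ys with
  | nil => cases ys with
    | nil => rfl
    | cons y ys => simp [chain, Fin.ext_iff] at h
  | cons x xs ih =>
    cases ys with
    | nil => simp [chain, Fin.ext_iff] at h
    | cons y ys =>
      simp only [chain, RTerm.node.injEq, List.cons.injEq, true_and, and_true] at h
      rw [iter1_inj h.1, ih h.2]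

lemma chain_ne_iter1 (n : ℕ) (ns : List ℕ) (k : ℕ) : chain (n :: ns) ≠ iter1 k := by
  cases k <;> simp [chain, iter1, Fin.ext_iff]

lemma rep_one_inj {m m' : ℕ} (h : List.replicate m (1 : ℕ) = List.replicate m' 1) : m = m' := by
  have := congrArg List.length h
  simpa using this

lemma rep_ne_app (i m : ℕ) (c : List ℕ) :
    List.replicate m (1 : ℕ) ≠ List.replicate i 1 ++ 0 :: c := by
  induction i generalizing m with
  | zero => cases m <;> simp [List.replicate_succ]
  | succ i ih =>
    cases m with
    | zero => simp [List.replicate_succ]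
    | succ m =>
      intro h
      rw [List.replicate_succ, List.replicate_succ, List.cons_append] at h
      have h2 : List.replicate m (1:ℕ) = List.replicate i 1 ++ 0 :: c := by
        injection h
      exact ih m h2

lemma satGC_iff_atoms {β F Q : Type} (E : List (Pat F × Pat F)) (st : β → Q) (sy : β → F)
    (r : RTerm β) (c : GC Q) (hconj : c.IsConjAtoms) (hen : c.AtomsAre GAtom.IsEqNeq) :
    satGC E st sy r c ↔
      ((∀ qq ∈ c.eqAtoms, satAtom E st sy r (GAtom.eq qq.1 qq.2)) ∧
       (∀ qq ∈ c.neqAtoms, satAtom E st sy r (GAtom.neq qq.1 qq.2))) := by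
  induction c with
  | tt => simp [satGC, GC.eqAtoms, GC.neqAtoms]
  | ff => exact absurd hconj (by simp [GC.IsConjAtoms])
  | atom a =>
    cases a with
    | eq q q' => simp [satGC, GC.eqAtoms, GC.neqAtoms]
    | neq q q' => simp [satGC, GC.eqAtoms, GC.neqAtoms]
    | cnt l a => exact absurd hen (by simp [GC.AtomsAre, GAtom.IsEqNeq])
    | cls l a => exact absurd hen (by simp [GC.AtomsAre, GAtom.IsEqNeq])
  | and c d ihc ihd =>
    rw [show satGC E st sy r (GC.and c d) = (satGC E st sy r c ∧ satGC E st sy r d) from rfl,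
      ihc hconj.1 hen.1, ihd hconj.2 hen.2]
    simp only [GC.eqAtoms, GC.neqAtoms, List.mem_append]
    constructor
    · rintro ⟨⟨a1, a2⟩, ⟨b1, b2⟩⟩
      exact ⟨fun qq h => h.elim (a1 qq) (b1 qq), fun qq h => h.elim (a2 qq) (b2 qq)⟩
    · rintro ⟨h1, h2⟩
      exact ⟨⟨fun qq h => h1 qq (Or.inl h), fun qq h => h2 qq (Or.inl h)⟩,
        ⟨fun qq h => h1 qq (Or.inr h), fun qq h => h2 qq (Or.inr h)⟩⟩
  | or c d ihc ihd => exact absurd hconj (by simp [GC.IsConjAtoms])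
  | not c ih => exact absurd hconj (by simp [GC.IsConjAtoms])

lemma noReflNeq_atoms {Q : Type} {c : GC Q} (h : c.NoReflNeq) :
    ∀ qq ∈ c.neqAtoms, qq.1 ≠ qq.2 := by
  induction c with
  | tt => simp [GC.neqAtoms]
  | ff => simp [GC.neqAtoms]
  | atom a =>
    cases a with
    | eq q q' => simp [GC.neqAtoms]
    | neq q q' =>
      intro qq hqq
      simp [GC.neqAtoms] at hqq
      subst hqq
      exact h
    | cnt l a => simp [GC.neqAtoms]
    | cls l a => simp [GC.neqAtoms]
  | and c d ihc ihd =>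
    intro qq hqq
    rcases List.mem_append.1 hqq with h' | h'
    · exact ihc h.1 qq h'
    · exact ihd h.2 qq h'
  | or c d ihc ihd =>
    intro qq hqq
    rcases List.mem_append.1 hqq with h' | h'
    · exact ihc h.1 qq h'
    · exact ihd h.2 qq h'
  | not c ih => exact ih h


/-! ### Part 2: a TAG^∧ recognizing LKey -/

def R0 : Rule (Fin 3) (Fin 3) := ⟨0, [], [], [], 0⟩
def R1 : Rule (Fin 3) (Fin 3) := ⟨1, [0], [], [], 0⟩
def R2 : Rule (Fin 3) (Fin 3) := ⟨0, [], [], [], 1⟩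
def R3 : Rule (Fin 3) (Fin 3) := ⟨1, [0], [], [], 1⟩
def R4 : Rule (Fin 3) (Fin 3) := ⟨0, [], [], [], 2⟩
def R5 : Rule (Fin 3) (Fin 3) := ⟨2, [1, 2], [], [], 2⟩

def A0 : TABG (Fin 3) (Fin 3) :=
  { arity := ar3, stQ := Finset.univ, rules := [R0, R1, R2, R3, R4, R5],
    final := [2], eqs := [], gc := GC.atom (GAtom.neq 1 1) }

def rQ0 : ℕ → Run (Fin 3) (Fin 3)
  | 0 => RTerm.node R0 []
  | n + 1 => RTerm.node R1 [rQ0 n]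

def rQ1 : ℕ → Run (Fin 3) (Fin 3)
  | 0 => RTerm.node R2 []
  | n + 1 => RTerm.node R3 [rQ0 n]

def rChain : List ℕ → Run (Fin 3) (Fin 3)
  | [] => RTerm.node R4 []
  | n :: ns => RTerm.node R5 [rQ1 n, rChain ns]

lemma state_rQ0 (n : ℕ) : Run.state (rQ0 n) = 0 := by cases n <;> rfl
lemma state_rQ1 (n : ℕ) : Run.state (rQ1 n) = 1 := by cases n <;> rfl
lemma state_rChain (ns : List ℕ) : Run.state (rChain ns) = 2 := by cases ns <;> rfl

lemma term_rQ0 (n : ℕ) : Run.term (rQ0 n) = iter1 n := by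
  induction n with
  | zero => simp [rQ0, term_node, R0, iter1]
  | succ n ih => simp [rQ0, term_node, R1, iter1, ih]

lemma term_rQ1 (n : ℕ) : Run.term (rQ1 n) = iter1 n := by
  cases n with
  | zero => simp [rQ1, term_node, R2, iter1]
  | succ n => simp [rQ1, term_node, R3, iter1, term_rQ0]

lemma term_rChain (ns : List ℕ) : Run.term (rChain ns) = chain ns := by
  induction ns with
  | nil => simp [rChain, term_node, R4, chain]
  | cons n ns ih => simp [rChain, term_node, R5, chain, term_rQ1, ih]

lemma isRun_rQ0 (n : ℕ) : IsRun A0.rules [] (rQ0 n) := by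
  induction n with
  | zero =>
    refine IsRun.node (by simp [A0]) (by simp [R0]) (by simp) ?_ ?_ <;>
      (intro i j ri rj h; simp [R0] at h)
  | succ n ih =>
    refine IsRun.node (by simp [A0]) (by simp [R1, state_rQ0]) (by simpa using ih) ?_ ?_ <;>
      (intro i j ri rj h; simp [R1] at h)

lemma isRun_rQ1 (n : ℕ) : IsRun A0.rules [] (rQ1 n) := by
  cases n with
  | zero =>
    refine IsRun.node (by simp [A0]) (by simp [R2]) (by simp) ?_ ?_ <;>
      (intro i j ri rj h; simp [R2] at h)
  | succ n =>
    refine IsRun.node (by simp [A0]) (by simp [R3, state_rQ0]) (by simpa using isRun_rQ0 n)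
        ?_ ?_ <;>
      (intro i j ri rj h; simp [R3] at h)

lemma isRun_rChain (ns : List ℕ) : IsRun A0.rules [] (rChain ns) := by
  induction ns with
  | nil =>
    refine IsRun.node (by simp [A0]) (by simp [R4]) (by simp) ?_ ?_ <;>
      (intro i j ri rj h; simp [R4] at h)
  | cons n ns ih =>
    refine IsRun.node (by simp [A0]) (by simp [R5, state_rQ1, state_rChain]) ?_ ?_ ?_
    · intro r hr
      simp at hr
      rcases hr with rfl | rfl
      exacts [isRun_rQ1 n, ih]
    all_goals (intro i j ri rj h; simp [R5] at h)

lemma char_rQ0 {n : ℕ} {p : List ℕ} {s : Run (Fin 3) (Fin 3)}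
    (h : RTerm.SubAt (rQ0 n) p s) : ∃ k, s = rQ0 k := by
  induction n generalizing p s with
  | zero =>
    cases p with
    | nil => exact ⟨0, subAt_nil h⟩
    | cons i p =>
      rcases subAt_cons (by simpa [rQ0] using h) with ⟨u, hget, _⟩
      simp at hget
  | succ n ih =>
    cases p with
    | nil => exact ⟨n + 1, subAt_nil h⟩
    | cons i p =>
      rcases subAt_cons (by simpa [rQ0] using h) with ⟨u, hget, hsub⟩
      cases i with
      | zero =>
        simp at hget
        subst hget
        exact ih hsub
      | succ i => simp at hget

lemma char_rQ1 {n : ℕ} {p : List ℕ} {s : Run (Fin 3) (Fin 3)}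
    (h : RTerm.SubAt (rQ1 n) p s) : (p = [] ∧ s = rQ1 n) ∨ ∃ k, s = rQ0 k := by
  cases p with
  | nil => exact Or.inl ⟨rfl, subAt_nil h⟩
  | cons i p =>
    cases n with
    | zero =>
      rcases subAt_cons (by simpa [rQ1] using h) with ⟨u, hget, _⟩
      simp at hget
    | succ n =>
      rcases subAt_cons (by simpa [rQ1] using h) with ⟨u, hget, hsub⟩
      cases i with
      | zero =>
        simp at hget
        subst hget
        exact Or.inr (char_rQ0 hsub)
      | succ i => simp at hget

lemma char_rChain {ns : List ℕ} {p : List ℕ} {s : Run (Fin 3) (Fin 3)}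
    (h : RTerm.SubAt (rChain ns) p s) (hst : Run.state s = 1) :
    ∃ m nm, ns[m]? = some nm ∧ p = List.replicate m 1 ++ [0] ∧ s = rQ1 nm := by
  induction ns generalizing p s with
  | nil =>
    cases p with
    | nil =>
      rw [subAt_nil h, state_rChain] at hst
      exact absurd hst (by decide)
    | cons i p =>
      rcases subAt_cons (by simpa [rChain] using h) with ⟨u, hget, _⟩
      simp at hget
  | cons n ns ih =>
    cases p with
    | nil =>
      rw [subAt_nil h, state_rChain] at hst
      exact absurd hst (by decide)
    | cons i p =>
      rcases subAt_cons (by simpa [rChain] using h) with ⟨u, hget, hsub⟩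
      cases i with
      | zero =>
        simp at hget
        subst hget
        rcases char_rQ1 hsub with ⟨rfl, rfl⟩ | ⟨k, rfl⟩
        · exact ⟨0, n, rfl, rfl, rfl⟩
        · rw [state_rQ0] at hst
          exact absurd hst (by decide)
      | succ i =>
        cases i with
        | zero =>
          simp at hget
          subst hget
          rcases ih hsub hst with ⟨m, nm, h1, rfl, rfl⟩
          exact ⟨m + 1, nm, h1, by simp [List.replicate_succ], rfl⟩
        | succ i => simp at hget

lemma A0_sound {r : Run (Fin 3) (Fin 3)} (h : IsRun A0.rules [] r) :
    (Run.state r = 0 → ∃ k, Run.term r = iter1 k) ∧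
    (Run.state r = 1 → ∃ k, Run.term r = iter1 k) ∧
    (Run.state r = 2 → ∃ ns : List ℕ, Run.term r = chain ns ∧
      ∀ m nm, ns[m]? = some nm → ∃ s, RTerm.SubAt r (List.replicate m 1 ++ [0]) s ∧
        Run.state s = 1 ∧ Run.term s = iter1 nm) := by
  induction h with
  | @node ρ rs hρ hargs hall hbe hbn ih =>
    have hρ' : ρ ∈ [R0, R1, R2, R3, R4, R5] := hρ
    simp only [List.mem_cons, List.not_mem_nil, or_false] at hρ'
    rcases hρ' with rfl | rfl | rfl | rfl | rfl | rfl
    · -- R0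
      have hargs' : ([] : List (Fin 3)) = rs.map Run.state := hargs
      have hrs : rs = [] := by
        cases rs with
        | nil => rfl
        | cons a l => exact absurd hargs'.symm (by simp)
      subst hrs
      refine ⟨fun _ => ⟨0, by simp [term_node, R0, iter1]⟩, ?_, ?_⟩ <;>
        (intro hst; rw [state_node] at hst; exact absurd hst (by decide))
    · -- R1
      rcases rs with _ | ⟨u, _ | ⟨w, rs⟩⟩ <;> simp [R1] at hargs
      obtain ⟨k, hk⟩ := (ih u (by simp)).1 hargs.symm
      refine ⟨fun _ => ⟨k + 1, by simp [term_node, R1, iter1, hk]⟩, ?_, ?_⟩ <;>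
        (intro hst; rw [state_node] at hst; exact absurd hst (by decide))
    · -- R2
      have hargs' : ([] : List (Fin 3)) = rs.map Run.state := hargs
      have hrs : rs = [] := by
        cases rs with
        | nil => rfl
        | cons a l => exact absurd hargs'.symm (by simp)
      subst hrs
      refine ⟨?_, fun _ => ⟨0, by simp [term_node, R2, iter1]⟩, ?_⟩ <;>
        (intro hst; rw [state_node] at hst; exact absurd hst (by decide))
    · -- R3
      rcases rs with _ | ⟨u, _ | ⟨w, rs⟩⟩ <;> simp [R3] at hargs
      obtain ⟨k, hk⟩ := (ih u (by simp)).1 hargs.symm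
      refine ⟨?_, fun _ => ⟨k + 1, by simp [term_node, R3, iter1, hk]⟩, ?_⟩ <;>
        (intro hst; rw [state_node] at hst; exact absurd hst (by decide))
    · -- R4
      have hargs' : ([] : List (Fin 3)) = rs.map Run.state := hargs
      have hrs : rs = [] := by
        cases rs with
        | nil => rfl
        | cons a l => exact absurd hargs'.symm (by simp)
      subst hrs
      refine ⟨?_, ?_, fun _ => ⟨[], by simp [term_node, R4, chain], ?_⟩⟩
      · intro hst; rw [state_node] at hst; exact absurd hst (by decide)
      · intro hst; rw [state_node] at hst; exact absurd hst (by decide)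
      · intro m nm hm
        simp at hm
    · -- R5
      rcases rs with _ | ⟨u, _ | ⟨w, _ | ⟨x, rs⟩⟩⟩ <;> simp [R5] at hargs
      obtain ⟨k, hk⟩ := (ih u (by simp)).2.1 hargs.1.symm
      obtain ⟨ns, hns, H⟩ := (ih w (by simp)).2.2 hargs.2.symm
      refine ⟨?_, ?_, fun _ => ⟨k :: ns, by simp [term_node, R5, chain, hk, hns], ?_⟩⟩
      · intro hst; rw [state_node] at hst; exact absurd hst (by decide)
      · intro hst; rw [state_node] at hst; exact absurd hst (by decide)
      · intro m nm hm
        cases m with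
        | zero =>
          simp only [List.getElem?_cons_zero, Option.some.injEq] at hm
          subst hm
          exact ⟨u, RTerm.SubAt.step (by simp) (RTerm.SubAt.refl u), hargs.1.symm,
            hk ▸ rfl⟩
        | succ m =>
          rw [List.getElem?_cons_succ] at hm
          obtain ⟨s, hs, h1, h2⟩ := H m nm hm
          exact ⟨s, by simpa [List.replicate_succ] using
            RTerm.SubAt.step (by simp : [u, w][1]? = some w) hs, h1, h2⟩

lemma A0_lang : A0.Lang = LKey := by
  ext t
  constructor
  · rintro ⟨r, ⟨hrun, hgc, hfin⟩, rfl⟩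
    have hst : Run.state r = 2 := by simpa [A0] using hfin
    obtain ⟨ns, hterm, H⟩ := (A0_sound hrun).2.2 hst
    refine ⟨ns, ?_, hterm⟩
    rw [List.nodup_iff_injective_get]
    intro i j hij
    by_contra hne
    obtain ⟨si, hsi, hsti, htermi⟩ := H i.1 (ns.get i) (List.getElem?_eq_getElem i.2)
    obtain ⟨sj, hsj, hstj, htermj⟩ := H j.1 (ns.get j) (List.getElem?_eq_getElem j.2)
    have hpne : List.replicate i.1 (1:ℕ) ++ [0] ≠ List.replicate j.1 1 ++ [0] := by
      intro hcon
      apply hne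
      have := congrArg List.length hcon
      simp at this
      exact Fin.ext this
    have hcon := hgc (List.replicate i.1 1 ++ [0]) (List.replicate j.1 1 ++ [0]) si sj hpne
      hsi hsj hsti hstj
    exact hcon (eqE_nil.2 (show Run.term si = Run.term sj by rw [htermi, htermj, hij]))
  · rintro ⟨ns, hnodup, rfl⟩
    refine ⟨rChain ns, ⟨isRun_rChain ns, ?_, by simp [A0, state_rChain]⟩, term_rChain ns⟩
    intro p p' s s' hne hsub hsub' h1 h1'
    obtain ⟨m, nm, hget, rfl, rfl⟩ := char_rChain hsub h1
    obtain ⟨m', nm', hget', rfl, rfl⟩ := char_rChain hsub' h1'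
    intro heq
    have heq0 : Run.term (rQ1 nm) = Run.term (rQ1 nm') := eqE_nil.1 heq
    rw [term_rQ1, term_rQ1] at heq0
    have hmm : nm = nm' := iter1_inj heq0
    subst hmm
    have : m = m' := by
      have hlen : m < ns.length := by
        rcases List.getElem?_eq_some_iff.1 hget with ⟨hh, _⟩
        exact hh
      exact (List.getElem?_inj hlen hnodup).1 (hget.trans hget'.symm)
    subst this
    exact hne rfl

lemma A0_WF : A0.WF := by
  refine ⟨by simp [A0], ?_, ?_⟩
  · intro ρ hρ
    have hρ' : ρ ∈ [R0, R1, R2, R3, R4, R5] := hρ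
    simp only [List.mem_cons, List.not_mem_nil, or_false] at hρ'
    rcases hρ' with rfl | rfl | rfl | rfl | rfl | rfl <;>
      exact ⟨by decide, Finset.mem_univ _, fun q _ => Finset.mem_univ _,
        by decide, by decide⟩
  · intro q _
    exact Finset.mem_univ _

lemma A0_cond : TAGCwCond A0 := by
  refine ⟨⟨rfl, ?_⟩, trivial, trivial⟩
  intro ρ hρ
  have hρ' : ρ ∈ [R0, R1, R2, R3, R4, R5] := hρ
  simp only [List.mem_cons, List.not_mem_nil, or_false] at hρ'
  rcases hρ' with rfl | rfl | rfl | rfl | rfl | rfl <;>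
    exact ⟨rfl, rfl⟩


/-! ### Part 3: LKey is not recognized by any TAGED -/

lemma chain_eq_iter1 {xs : List ℕ} {k : ℕ} (h : chain xs = iter1 k) : xs = [] := by
  cases xs with
  | nil => rfl
  | cons x xs => exact absurd h (chain_ne_iter1 _ _ _)

lemma chain_run_destruct {Q : Type} {r : Run (Fin 3) Q} {n : ℕ} {ms : List ℕ}
    (hterm : Run.term r = chain (n :: ms)) :
    ∃ ρ u v, r = RTerm.node ρ [u, v] ∧ ρ.sym = 2 ∧
      Run.term u = iter1 n ∧ Run.term v = chain ms := by
  cases r with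
  | node ρ rs =>
    rw [term_node] at hterm
    rcases rs with _ | ⟨u, _ | ⟨v, _ | ⟨w, l⟩⟩⟩ <;> simp [chain] at hterm
    exact ⟨ρ, u, v, rfl, hterm.1, hterm.2.1, hterm.2.2⟩

lemma char_iterRun {Q : Type} : ∀ (n : ℕ) (u : Run (Fin 3) Q),
    Run.term u = iter1 n → ∀ {p : List ℕ} {s : Run (Fin 3) Q},
      RTerm.SubAt u p s → ∃ k, Run.term s = iter1 k := by
  intro n
  induction n with
  | zero =>
    intro u hterm p s hsub
    cases u with
    | node ρ rs =>
      rw [term_node] at hterm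
      rcases rs with _ | ⟨w, l⟩ <;> simp [iter1] at hterm
      cases p with
      | nil => exact ⟨0, by rw [subAt_nil hsub, term_node]; simp [iter1, hterm]⟩
      | cons a p =>
        rcases subAt_cons hsub with ⟨w, hget, _⟩
        simp at hget
  | succ n ih =>
    intro u hterm p s hsub
    cases u with
    | node ρ rs =>
      rw [term_node] at hterm
      rcases rs with _ | ⟨w, _ | ⟨x, l⟩⟩ <;> simp [iter1] at hterm
      cases p with
      | nil =>
        refine ⟨n + 1, ?_⟩
        rw [subAt_nil hsub, term_node]
        simp [iter1, hterm.1, hterm.2]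
      | cons a p =>
        rcases subAt_cons hsub with ⟨w', hget, hsub'⟩
        cases a with
        | zero =>
          simp at hget
          subst hget
          exact ih w hterm.2 hsub'
        | succ a => simp at hget

lemma char_chainRun {Q : Type} : ∀ (ms : List ℕ) (r : Run (Fin 3) Q),
    Run.term r = chain ms → ∀ {p : List ℕ} {s : Run (Fin 3) Q},
      RTerm.SubAt r p s →
      (∃ m, p = List.replicate m 1 ∧ Run.term s = chain (List.drop m ms)) ∨
      (∃ k, Run.term s = iter1 k) := by
  intro ms
  induction ms with
  | nil =>
    intro r hterm p s hsub
    cases r with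
    | node ρ rs =>
      rw [term_node] at hterm
      rcases rs with _ | ⟨w, l⟩ <;> simp [chain] at hterm
      cases p with
      | nil =>
        refine Or.inl ⟨0, rfl, ?_⟩
        rw [subAt_nil hsub, term_node]
        simp [chain, hterm]
      | cons a p =>
        rcases subAt_cons hsub with ⟨w, hget, _⟩
        simp at hget
  | cons n ms ih =>
    intro r hterm p s hsub
    obtain ⟨ρ, u, v, rfl, hsym, hu, hv⟩ := chain_run_destruct hterm
    cases p with
    | nil => exact Or.inl ⟨0, rfl, by rw [subAt_nil hsub]; exact hterm⟩
    | cons a p =>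
      rcases subAt_cons hsub with ⟨w', hget, hsub'⟩
      cases a with
      | zero =>
        simp at hget
        subst hget
        exact Or.inr (char_iterRun n u hu hsub')
      | succ a =>
        cases a with
        | zero =>
          simp at hget
          subst hget
          rcases ih v hv hsub' with ⟨m, rfl, ht⟩ | hit
          · exact Or.inl ⟨m + 1, by simp [List.replicate_succ], ht⟩
          · exact Or.inr hit
        | succ a => simp at hget

lemma chainRun_ex {Q : Type} {Δ : List (Rule (Fin 3) Q)} :
    ∀ (ms : List ℕ) (r : Run (Fin 3) Q), IsRun Δ [] r → Run.term r = chain ms →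
    ∀ m nm, ms[m]? = some nm →
      ∃ u, RTerm.SubAt r (List.replicate m 1 ++ [0]) u ∧ IsRun Δ [] u ∧
        Run.term u = iter1 nm := by
  intro ms
  induction ms with
  | nil =>
    intro r _ _ m nm h
    simp at h
  | cons n ms ih =>
    intro r hrun hterm m nm hm
    obtain ⟨ρ, u, v, rfl, hsym, hu, hv⟩ := chain_run_destruct hterm
    have hrunu : IsRun Δ [] u := by
      cases hrun with
      | node h1 h2 h3 h4 h5 => exact h3 u (by simp)
    have hrunv : IsRun Δ [] v := by
      cases hrun with
      | node h1 h2 h3 h4 h5 => exact h3 v (by simp)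
    cases m with
    | zero =>
      simp only [List.getElem?_cons_zero, Option.some.injEq] at hm
      subst hm
      exact ⟨u, RTerm.SubAt.step (by simp) (RTerm.SubAt.refl u), hrunu, hu⟩
    | succ m =>
      rw [List.getElem?_cons_succ] at hm
      obtain ⟨w, hw, hwrun, hwterm⟩ := ih v hrunv hv m nm hm
      exact ⟨w, by simpa [List.replicate_succ] using
        RTerm.SubAt.step (by simp : [u, v][1]? = some v) hw, hwrun, hwterm⟩

def rrep {F Q : Type} (rep : Run F Q) : ℕ → Run F Q → Run F Q
  | 0, r =>
    match r with
    | RTerm.node ρ (_ :: y :: tl) => RTerm.node ρ (rep :: y :: tl)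
    | t => t
  | m + 1, r =>
    match r with
    | RTerm.node ρ (x :: y :: tl) => RTerm.node ρ (x :: rrep rep m y :: tl)
    | t => t

lemma rrep_char {Q : Type} {Δ : List (Rule (Fin 3) Q)}
    (hNB : ∀ ρ ∈ Δ, ρ.bcEq = [] ∧ ρ.bcNeq = []) (rep : Run (Fin 3) Q) (k : ℕ)
    (hrepRun : IsRun Δ [] rep) (hrepT : Run.term rep = iter1 k) :
    ∀ (i : ℕ) (ms : List ℕ) (r : Run (Fin 3) Q), IsRun Δ [] r → Run.term r = chain ms →
      i < ms.length →
      (∀ u, RTerm.SubAt r (List.replicate i 1 ++ [0]) u → Run.state rep = Run.state u) →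
      IsRun Δ [] (rrep rep i r) ∧
      Run.term (rrep rep i r) = chain (ms.set i k) ∧
      Run.state (rrep rep i r) = Run.state r ∧
      (∀ p s', RTerm.SubAt (rrep rep i r) p s' →
        (∃ m, m ≤ i ∧ p = List.replicate m 1 ∧
          Run.term s' = chain (List.drop m (ms.set i k)) ∧
          ∃ s, RTerm.SubAt r p s ∧ Run.state s' = Run.state s ∧
            Run.term s = chain (List.drop m ms)) ∨
        (∃ c, p = List.replicate i 1 ++ 0 :: c ∧ RTerm.SubAt rep c s') ∨
        (RTerm.SubAt r p s' ∧ (∀ m, m ≤ i → p ≠ List.replicate m 1) ∧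
          (∀ c, p ≠ List.replicate i 1 ++ 0 :: c))) := by
  intro i
  induction i with
  | zero =>
    intro ms r hrun hterm hlen hst
    cases ms with
    | nil => simp at hlen
    | cons n ms =>
      obtain ⟨ρ, u, v, rfl, hsym, hu, hv⟩ := chain_run_destruct hterm
      have hr' : rrep rep 0 (RTerm.node ρ [u, v]) = RTerm.node ρ [rep, v] := rfl
      have hstu : Run.state rep = Run.state u :=
        hst u (RTerm.SubAt.step (by simp) (RTerm.SubAt.refl u))
      obtain ⟨hρ, hargs, hall⟩ : ρ ∈ Δ ∧ ρ.args = List.map Run.state [u, v] ∧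
          ∀ y ∈ [u, v], IsRun Δ [] y := by
        cases hrun with
        | node h1 h2 h3 h4 h5 => exact ⟨h1, h2, h3⟩
      have hrun' : IsRun Δ [] (RTerm.node ρ [rep, v]) := by
        refine IsRun.node hρ ?_ ?_ ?_ ?_
        · rw [hargs]
          simp [hstu]
        · intro y hy
          simp at hy
          rcases hy with rfl | rfl
          exacts [hrepRun, hall _ (by simp)]
        · intro a b ra rb hab
          rw [(hNB ρ hρ).1] at hab
          simp at hab
        · intro a b ra rb hab
          rw [(hNB ρ hρ).2] at hab
          simp at hab
      have hterm' : Run.term (RTerm.node ρ [rep, v]) = chain ((n :: ms).set 0 k) := by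
        rw [term_node]
        simp [chain, hsym, hrepT, hv]
      refine ⟨hr' ▸ hrun', hr' ▸ hterm', by rw [hr']; rfl, ?_⟩
      rw [hr']
      intro p s' hsub
      cases p with
      | nil =>
        refine Or.inl ⟨0, le_refl 0, rfl, ?_, RTerm.node ρ [u, v], RTerm.SubAt.refl _,
          by rw [subAt_nil hsub]; rfl, hterm⟩
        rw [subAt_nil hsub]
        exact hterm'
      | cons a p =>
        rcases subAt_cons hsub with ⟨w', hget, hsub'⟩
        cases a with
        | zero =>
          simp at hget
          subst hget
          exact Or.inr (Or.inl ⟨p, rfl, hsub'⟩)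
        | succ a =>
          cases a with
          | zero =>
            simp at hget
            subst hget
            refine Or.inr (Or.inr ⟨RTerm.SubAt.step (by simp) hsub', ?_, ?_⟩)
            · intro m hm
              have : m = 0 := Nat.le_zero.mp hm
              subst this
              simp
            · intro c
              simp
          | succ a => simp at hget
  | succ i ih =>
    intro ms r hrun hterm hlen hst
    cases ms with
    | nil => simp at hlen
    | cons n ms =>
      obtain ⟨ρ, u, v, rfl, hsym, hu, hv⟩ := chain_run_destruct hterm
      have hr' : rrep rep (i + 1) (RTerm.node ρ [u, v])
          = RTerm.node ρ [u, rrep rep i v] := rfl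
      have hstv : ∀ w, RTerm.SubAt v (List.replicate i 1 ++ [0]) w →
          Run.state rep = Run.state w := by
        intro w hw
        refine hst w ?_
        rw [List.replicate_succ, List.cons_append]
        exact RTerm.SubAt.step (by simp) hw
      obtain ⟨hρ, hargs, hall⟩ : ρ ∈ Δ ∧ ρ.args = List.map Run.state [u, v] ∧
          ∀ y ∈ [u, v], IsRun Δ [] y := by
        cases hrun with
        | node h1 h2 h3 h4 h5 => exact ⟨h1, h2, h3⟩
      obtain ⟨hrunv', htermv', hstatev', hcharv'⟩ :=
        ih ms v (hall v (by simp)) hv (by simpa using hlen) hstv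
      have hrun' : IsRun Δ [] (RTerm.node ρ [u, rrep rep i v]) := by
        refine IsRun.node hρ ?_ ?_ ?_ ?_
        · rw [hargs]
          simp [hstatev']
        · intro y hy
          simp at hy
          rcases hy with rfl | rfl
          exacts [hall _ (by simp), hrunv']
        · intro a b ra rb hab
          rw [(hNB ρ hρ).1] at hab
          simp at hab
        · intro a b ra rb hab
          rw [(hNB ρ hρ).2] at hab
          simp at hab
      have hterm' : Run.term (RTerm.node ρ [u, rrep rep i v])
          = chain ((n :: ms).set (i + 1) k) := by
        rw [term_node]
        show RTerm.node ρ.sym [Run.term u, Run.term (rrep rep i v)] = _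
        rw [hsym, hu, htermv']
        rfl
      refine ⟨hr' ▸ hrun', hr' ▸ hterm', by rw [hr']; rfl, ?_⟩
      rw [hr']
      intro p s' hsub
      cases p with
      | nil =>
        refine Or.inl ⟨0, Nat.zero_le _, rfl, ?_, RTerm.node ρ [u, v], RTerm.SubAt.refl _,
          by rw [subAt_nil hsub]; rfl, hterm⟩
        rw [subAt_nil hsub]
        exact hterm'
      | cons a p =>
        rcases subAt_cons hsub with ⟨w', hget, hsub'⟩
        cases a with
        | zero =>
          simp at hget
          subst hget
          refine Or.inr (Or.inr ⟨RTerm.SubAt.step (by simp) hsub', ?_, ?_⟩)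
          · intro m hm
            cases m with
            | zero => simp
            | succ m => simp [List.replicate_succ]
          · intro c
            simp [List.replicate_succ]
        | succ a =>
          cases a with
          | zero =>
            simp at hget
            subst hget
            rcases hcharv' p s' hsub' with
              ⟨m, hm, rfl, ht', s, hsR, hstq, htms⟩ | ⟨c, rfl, hc⟩ | ⟨hsR, hne1, hne2⟩
            · refine Or.inl ⟨m + 1, Nat.succ_le_succ hm, by simp [List.replicate_succ],
                by simpa [List.set] using ht', s, ?_, hstq, by simpa using htms⟩
              exact RTerm.SubAt.step (by simp) hsR
            · refine Or.inr (Or.inl ⟨c, ?_, hc⟩)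
              simp [List.replicate_succ]
            · refine Or.inr (Or.inr ⟨RTerm.SubAt.step (by simp) hsR, ?_, ?_⟩)
              · intro m hm
                cases m with
                | zero => simp
                | succ m =>
                  simp only [List.replicate_succ, ne_eq, List.cons.injEq, true_and]
                  exact hne1 m (Nat.le_of_succ_le_succ hm)
              · intro c
                simp only [List.replicate_succ, List.cons_append, ne_eq, List.cons.injEq,
                  true_and]
                exact hne2 c
          | succ a => simp at hget


lemma taged_not_LKey (Q : Type) (A : TABG (Fin 3) Q)
    (hWF : A.WF) (hT : TAGEDCond A) : A.Lang ≠ LKey := by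
  classical
  intro hL
  obtain ⟨⟨heqs, hNB⟩, hconj, hEN, hNR⟩ := hT
  set N := A.stQ.card + 1 with hN
  have hmem : chain (List.range N) ∈ A.Lang := by
    rw [hL]
    exact ⟨List.range N, List.nodup_range (n := N), rfl⟩
  obtain ⟨r, ⟨hrun0, hgc0, hfin⟩, hterm⟩ := hmem
  have hrun : IsRun A.rules [] r := by rw [heqs] at hrun0; exact hrun0
  have hgc : satGC [] Rule.res Rule.sym r A.gc := by rw [heqs] at hgc0; exact hgc0
  have hsat := (satGC_iff_atoms [] Rule.res Rule.sym r A.gc hconj hEN).1 hgc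
  have hrefl := noReflNeq_atoms hNR
  have hNlen : (List.range N).length = N := List.length_range (n := N)
  have hex : ∀ m : Fin N, ∃ u, RTerm.SubAt r (List.replicate m.1 1 ++ [0]) u ∧
      IsRun A.rules [] u ∧ Run.term u = iter1 m.1 :=
    fun m => chainRun_ex (List.range N) r hrun hterm m.1 m.1 (List.getElem?_range m.2)
  choose U hU hUrun hUterm using hex
  have hstQ : ∀ m : Fin N, Run.state (U m) ∈ A.stQ := by
    intro m
    cases hUm : U m with
    | node ρ rs =>
      have hh := hUrun m
      rw [hUm] at hh
      cases hh with
      | node h1 h2 h3 h4 h5 => exact (hWF.2.1 _ h1).2.1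
  obtain ⟨a, _, b, _, hab, hfab⟩ :=
    Finset.exists_ne_map_eq_of_card_lt_of_maps_to
      (show A.stQ.card < (Finset.univ : Finset (Fin N)).card by
        rw [Finset.card_univ, Fintype.card_fin, hN]
        exact Nat.lt_succ_self _)
      (fun m _ => hstQ m)
  obtain ⟨i, j, hij, hstij⟩ : ∃ i j : Fin N, i.1 < j.1 ∧
      Run.state (U i) = Run.state (U j) := by
    rcases lt_trichotomy a.1 b.1 with h | h | h
    · exact ⟨a, b, h, hfab⟩
    · exact absurd (Fin.ext h) hab
    · exact ⟨b, a, h, hfab.symm⟩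
  have hjN : j.1 < N := j.2
  have hiN : i.1 < N := i.2
  obtain ⟨hrun', hterm', hstate', hchar⟩ :=
    rrep_char hNB (U j) j.1 (hUrun j) (hUterm j) i.1 (List.range N) r hrun hterm
      (by rw [hNlen]; exact hiN)
      (fun u hu => by rw [subAt_unique hu (hU i)]; exact hstij.symm)
  have hlift : ∀ {c : List ℕ} {s' : Run (Fin 3) Q}, RTerm.SubAt (U j) c s' →
      RTerm.SubAt r ((List.replicate j.1 1 ++ [0]) ++ c) s' :=
    fun hc => subAt_trans (hU j) hc
  have happ : ∀ c : List ℕ, (List.replicate j.1 1 ++ [0]) ++ c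
      = List.replicate j.1 1 ++ 0 :: c := by simp
  have hdropL : ∀ {m : ℕ}, m < N →
      List.drop m ((List.range N).set i.1 j.1) ≠ [] := by
    intro m hm h
    have hh := congrArg List.length h
    simp [hNlen] at hh
    omega
  have hterm_r2 : ∀ {p : List ℕ} {s : Run (Fin 3) Q}, RTerm.SubAt r p s →
      (∃ m'', p = List.replicate m'' 1 ∧
        Run.term s = chain (List.drop m'' (List.range N))) ∨
      (∃ k', Run.term s = iter1 k') :=
    fun h => char_chainRun (List.range N) r hterm h
  have huniq : ∀ {p : List ℕ} {s : Run (Fin 3) Q} {m : ℕ}, m < N → RTerm.SubAt r p s →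
      chain (List.drop m (List.range N)) = Run.term s → p = List.replicate m 1 := by
    intro p s m hm hsub he
    rcases hterm_r2 hsub with ⟨m'', rfl, ht⟩ | ⟨k', ht⟩
    · rw [ht] at he
      have h1 := chain_inj he
      have hlen := congrArg List.length h1
      simp [hNlen] at hlen
      have : m = m'' := by omega
      rw [this]
    · rw [ht] at he
      have h1 := chain_eq_iter1 he
      have h2 := congrArg List.length h1
      simp [hNlen] at h2
      omega
  have hsatGC' : satGC [] Rule.res Rule.sym (rrep (U j) i.1 r) A.gc := by
    rw [satGC_iff_atoms [] Rule.res Rule.sym _ A.gc hconj hEN]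
    constructor
    · rintro qq hmemq
      have hA := hsat.1 qq hmemq
      intro p1 p2 s1 s2 hpne hs1 hs2 hq1 hq2
      rcases hchar p1 s1 hs1 with
        ⟨m1, hm1, rfl, ht1, w1, hw1, hsw1, htw1⟩ | ⟨c1, rfl, hc1⟩ | ⟨hr1, hA1, hB1⟩
      · have hm1N : m1 < N := lt_of_le_of_lt hm1 (hij.trans hjN)
        rcases hchar p2 s2 hs2 with
          ⟨m2, hm2, rfl, ht2, w2, hw2, hsw2, htw2⟩ | ⟨c2, rfl, hc2⟩ | ⟨hr2, hA2, hB2⟩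
        · -- (1,1)
          exfalso
          have hm2N : m2 < N := lt_of_le_of_lt hm2 (hij.trans hjN)
          have hEq : Run.term w1 = Run.term w2 := eqE_nil.1
            (hA _ _ w1 w2 hpne hw1 hw2 (hsw1.symm.trans hq1) (hsw2.symm.trans hq2))
          rw [htw1, htw2] at hEq
          have hlen := congrArg List.length (chain_inj hEq)
          simp [hNlen] at hlen
          have : m1 = m2 := by omega
          subst this
          exact hpne rfl
        · -- (1,2)
          exfalso
          have hEq : Run.term w1 = Run.term s2 := eqE_nil.1
            (hA _ _ w1 s2
              (by rw [happ c2]; exact rep_ne_app j.1 m1 c2)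
              hw1 (hlift hc2) (hsw1.symm.trans hq1) hq2)
          have hP := huniq hm1N (hlift hc2) (by rw [← htw1]; exact hEq)
          rw [happ c2] at hP
          exact rep_ne_app j.1 m1 c2 hP.symm
        · -- (1,3)
          exfalso
          have hEq : Run.term w1 = Run.term s2 := eqE_nil.1
            (hA _ _ w1 s2 (Ne.symm (hA2 m1 hm1)) hw1 hr2 (hsw1.symm.trans hq1) hq2)
          have hP := huniq hm1N hr2 (by rw [← htw1]; exact hEq)
          exact hA2 m1 hm1 hP
      · rcases hchar p2 s2 hs2 with
          ⟨m2, hm2, rfl, ht2, w2, hw2, hsw2, htw2⟩ | ⟨c2, rfl, hc2⟩ | ⟨hr2, hA2, hB2⟩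
        · -- (2,1)
          exfalso
          have hm2N : m2 < N := lt_of_le_of_lt hm2 (hij.trans hjN)
          have hEq : Run.term s1 = Run.term w2 := eqE_nil.1
            (hA _ _ s1 w2
              (by rw [happ c1]; exact (rep_ne_app j.1 m2 c1).symm)
              (hlift hc1) hw2 hq1 (hsw2.symm.trans hq2))
          have hP := huniq hm2N (hlift hc1) (by rw [← htw2]; exact hEq.symm)
          rw [happ c1] at hP
          exact rep_ne_app j.1 m2 c1 hP.symm
        · -- (2,2)
          have hPne : (List.replicate j.1 1 ++ [0]) ++ c1
              ≠ (List.replicate j.1 1 ++ [0]) ++ c2 := by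
            intro h
            exact hpne (by rw [List.append_cancel_left h])
          exact hA _ _ s1 s2 hPne (hlift hc1) (hlift hc2) hq1 hq2
        · -- (2,3)
          by_cases hPp : (List.replicate j.1 1 ++ [0]) ++ c1 = p2
          · have hr2' : RTerm.SubAt r ((List.replicate j.1 1 ++ [0]) ++ c1) s2 := by
              rw [hPp]; exact hr2
            rw [subAt_unique (hlift hc1) hr2']
            exact Relation.ReflTransGen.refl
          · exact hA _ _ s1 s2 hPp (hlift hc1) hr2 hq1 hq2
      · rcases hchar p2 s2 hs2 with
          ⟨m2, hm2, rfl, ht2, w2, hw2, hsw2, htw2⟩ | ⟨c2, rfl, hc2⟩ | ⟨hr2, hA2, hB2⟩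
        · -- (3,1)
          exfalso
          have hm2N : m2 < N := lt_of_le_of_lt hm2 (hij.trans hjN)
          have hEq : Run.term s1 = Run.term w2 := eqE_nil.1
            (hA _ _ s1 w2 (hA1 m2 hm2) hr1 hw2 hq1 (hsw2.symm.trans hq2))
          have hP := huniq hm2N hr1 (by rw [← htw2]; exact hEq.symm)
          exact hA1 m2 hm2 hP
        · -- (3,2)
          by_cases hPp : p1 = (List.replicate j.1 1 ++ [0]) ++ c2
          · have hr1' : RTerm.SubAt r ((List.replicate j.1 1 ++ [0]) ++ c2) s1 := by
              rw [← hPp]; exact hr1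
            rw [subAt_unique hr1' (hlift hc2)]
            exact Relation.ReflTransGen.refl
          · exact hA _ _ s1 s2 hPp hr1 (hlift hc2) hq1 hq2
        · -- (3,3)
          exact hA _ _ s1 s2 hpne hr1 hr2 hq1 hq2
    · rintro qq hmemq
      have hA := hsat.2 qq hmemq
      have hqne : qq.1 ≠ qq.2 := hrefl qq hmemq
      intro p1 p2 s1 s2 hpne hs1 hs2 hq1 hq2
      rcases hchar p1 s1 hs1 with
        ⟨m1, hm1, rfl, ht1, w1, hw1, hsw1, htw1⟩ | ⟨c1, rfl, hc1⟩ | ⟨hr1, hA1, hB1⟩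
      · have hm1N : m1 < N := lt_of_le_of_lt hm1 (hij.trans hjN)
        intro hcon
        have hEq : Run.term s1 = Run.term s2 := eqE_nil.1 hcon
        rw [ht1] at hEq
        rcases hchar p2 s2 hs2 with
          ⟨m2, hm2, rfl, ht2, w2, hw2, hsw2, htw2⟩ | ⟨c2, rfl, hc2⟩ | ⟨hr2, hA2, hB2⟩
        · -- (1,1)
          have hm2N : m2 < N := lt_of_le_of_lt hm2 (hij.trans hjN)
          rw [ht2] at hEq
          have hlen := congrArg List.length (chain_inj hEq)
          simp [hNlen] at hlen
          have : m1 = m2 := by omega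
          subst this
          exact hpne rfl
        · -- (1,2)
          rcases hterm_r2 (hlift hc2) with ⟨m'', hp, ht''⟩ | ⟨k', ht''⟩
          · rw [happ c2] at hp
            exact rep_ne_app j.1 m'' c2 hp.symm
          · rw [ht''] at hEq
            exact hdropL hm1N (chain_eq_iter1 hEq)
        · -- (1,3)
          rcases hterm_r2 hr2 with ⟨m'', rfl, ht''⟩ | ⟨k', ht''⟩
          · rw [ht''] at hEq
            have hlen := congrArg List.length (chain_inj hEq)
            simp [hNlen] at hlen
            have : m'' = m1 := by omega
            exact hA2 m1 hm1 (by rw [this])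
          · rw [ht''] at hEq
            exact hdropL hm1N (chain_eq_iter1 hEq)
      · rcases hchar p2 s2 hs2 with
          ⟨m2, hm2, rfl, ht2, w2, hw2, hsw2, htw2⟩ | ⟨c2, rfl, hc2⟩ | ⟨hr2, hA2, hB2⟩
        · -- (2,1)
          have hm2N : m2 < N := lt_of_le_of_lt hm2 (hij.trans hjN)
          intro hcon
          have hEq : Run.term s1 = Run.term s2 := eqE_nil.1 hcon
          rw [ht2] at hEq
          rcases hterm_r2 (hlift hc1) with ⟨m'', hp, ht''⟩ | ⟨k', ht''⟩
          · rw [happ c1] at hp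
            exact rep_ne_app j.1 m'' c1 hp.symm
          · rw [ht''] at hEq
            exact hdropL hm2N (chain_eq_iter1 hEq.symm)
        · -- (2,2)
          have hPne : (List.replicate j.1 1 ++ [0]) ++ c1
              ≠ (List.replicate j.1 1 ++ [0]) ++ c2 := by
            intro h
            exact hpne (by rw [List.append_cancel_left h])
          exact hA _ _ s1 s2 hPne (hlift hc1) (hlift hc2) hq1 hq2
        · -- (2,3)
          by_cases hPp : (List.replicate j.1 1 ++ [0]) ++ c1 = p2
          · exfalso
            have hr2' : RTerm.SubAt r ((List.replicate j.1 1 ++ [0]) ++ c1) s2 := by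
              rw [hPp]; exact hr2
            have hss : s1 = s2 := subAt_unique (hlift hc1) hr2'
            exact hqne (by rw [← hq1, ← hq2, hss])
          · exact hA _ _ s1 s2 hPp (hlift hc1) hr2 hq1 hq2
      · rcases hchar p2 s2 hs2 with
          ⟨m2, hm2, rfl, ht2, w2, hw2, hsw2, htw2⟩ | ⟨c2, rfl, hc2⟩ | ⟨hr2, hA2, hB2⟩
        · -- (3,1)
          have hm2N : m2 < N := lt_of_le_of_lt hm2 (hij.trans hjN)
          intro hcon
          have hEq : Run.term s1 = Run.term s2 := eqE_nil.1 hcon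
          rw [ht2] at hEq
          rcases hterm_r2 hr1 with ⟨m'', rfl, ht''⟩ | ⟨k', ht''⟩
          · rw [ht''] at hEq
            have hlen := congrArg List.length (chain_inj hEq)
            simp [hNlen] at hlen
            have : m'' = m2 := by omega
            exact hA1 m2 hm2 (by rw [this])
          · rw [ht''] at hEq
            exact hdropL hm2N (chain_eq_iter1 hEq.symm)
        · -- (3,2)
          by_cases hPp : p1 = (List.replicate j.1 1 ++ [0]) ++ c2
          · exfalso
            have hr1' : RTerm.SubAt r ((List.replicate j.1 1 ++ [0]) ++ c2) s1 := by
              rw [← hPp]; exact hr1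
            have hss : s1 = s2 := subAt_unique hr1' (hlift hc2)
            exact hqne (by rw [← hq1, ← hq2, hss])
          · exact hA _ _ s1 s2 hPp hr1 (hlift hc2) hq1 hq2
        · -- (3,3)
          exact hA _ _ s1 s2 hpne hr1 hr2 hq1 hq2
  have hmem' : Run.term (rrep (U j) i.1 r) ∈ A.Lang := by
    refine ⟨rrep (U j) i.1 r, ⟨?_, ?_, ?_⟩, rfl⟩
    · rw [heqs]; exact hrun'
    · rw [heqs]; exact hsatGC'
    · rw [hstate']; exact hfin
  rw [hL] at hmem'
  obtain ⟨ms, hnd, hms⟩ := hmem'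
  have hmsL : ms = (List.range N).set i.1 j.1 := chain_inj (hms.symm.trans hterm')
  rw [hmsL] at hnd
  have h1 : ((List.range N).set i.1 j.1)[i.1]? = some j.1 :=
    List.getElem?_set_self (by rw [hNlen]; exact hiN)
  have h2 : ((List.range N).set i.1 j.1)[j.1]? = some j.1 := by
    rw [List.getElem?_set_ne (Nat.ne_of_lt hij)]
    exact List.getElem?_range hjN
  have hcontr := (List.getElem?_inj (by simpa using hiN) hnd).1 (h1.trans h2.symm)
  exact absurd hcontr (Nat.ne_of_lt hij)

/-- Every TAGED language is a `TAG^∧[≈,≉]` language, and the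
inclusion is strict: over `Σ = {a:0, s:1, f:2}`, the language of terms
`f(s^{n1}(a), f(s^{n2}(a), …, f(s^{nk}(a), a)…))` with the `n_i` pairwise
distinct is recognized by a `TAG^∧[≈,≉]` but by no TAGED. -/
theorem taged_strictly_included_in_tagcw :
    (∀ (F Q : Type) (A : TABG F Q), A.WF → TAGEDCond A →
      ∃ A' : TABG F Q, A'.WF ∧ TAGCwCond A' ∧ A'.arity = A.arity ∧
        A'.Lang = A.Lang) ∧
    (∃ (n : ℕ) (A : TABG (Fin 3) (Fin n)),
      A.arity = ar3 ∧ A.WF ∧ TAGCwCond A ∧ A.Lang = LKey) ∧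
    (∀ (Q : Type) (A : TABG (Fin 3) Q),
      A.arity = ar3 → A.WF → TAGEDCond A → A.Lang ≠ LKey) := by
  refine ⟨?_, ⟨3, A0, rfl, A0_WF, A0_cond, A0_lang⟩, fun Q A _ hWF hT => taged_not_LKey Q A hWF hT⟩
  intro F Q A hWF hT
  exact ⟨A, hWF, ⟨hT.1, hT.2.1, hT.2.2.1⟩, rfl, rfl⟩

end TreeAut
end
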